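/- arXiv:2001.09361 — 12 statements merged into one kernel-verified Lean document; each statement's English description precedes it below -/
import Mathlib

section
/- Let F : A × A → M be an f-biderivation. If α ≠ 0, M is (n-1)-torsion free, and α is M-regular, then F is a Jordan biderivation, i.e., for all x, y, z ∈ A: F(xy + yx, z) = F(x,z)y + xF(y,z) + F(y,z)x + yF(x,z) and F(z, xy + yx) = F(z,x)y + xF(z,y) + F(z,y)x + yF(z,x). -/
open MulOpposite

set_option linter.unusedSectionVars false


section Lists
variable {A : Type*} [Monoid A]

lemma prod_single' (l : List A) (j : ℕ) (hj : j < l.length)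
    (h : ∀ k, (hk : k < l.length) → k ≠ j → l[k] = 1) : l.prod = l[j] := by
  rw [← List.prod_take_mul_prod_drop l j, List.drop_eq_getElem_cons hj, List.prod_cons]
  have h1 : (l.take j).prod = 1 := by
    apply List.prod_eq_one
    intro a ha
    rw [List.mem_iff_getElem] at ha
    obtain ⟨k, hk, rfl⟩ := ha
    rw [List.getElem_take]
    exact h k (by simp at hk; omega) (by simp at hk; omega)
  have h2 : (l.drop (j+1)).prod = 1 := by
    apply List.prod_eq_one
    intro a ha
    rw [List.mem_iff_getElem] at ha
    obtain ⟨k, hk, rfl⟩ := ha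
    rw [List.getElem_drop]
    exact h _ (by simp at hk; omega) (by omega)
  rw [h1, h2, one_mul, mul_one]

lemma prod_pair' (l : List A) (i j : ℕ) (hij : i < j) (hj : j < l.length)
    (h : ∀ k, (hk : k < l.length) → k ≠ i → k ≠ j → l[k] = 1) :
    l.prod = l[i]'(by omega) * l[j] := by
  rw [← List.prod_take_mul_prod_drop l j, List.drop_eq_getElem_cons hj, List.prod_cons]
  have hlen : (l.take j).length = j := by simp; omega
  have h1 : (l.take j).prod = l[i]'(by omega) := by
    have hs := prod_single' (l.take j) i (by omega) ?_
    · rw [hs, List.getElem_take]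
    · intro k hk hki
      rw [List.getElem_take]
      exact h k (by rw [hlen] at hk; omega) hki (by rw [hlen] at hk; omega)
  have h2 : (l.drop (j+1)).prod = 1 := by
    apply List.prod_eq_one
    intro a ha
    rw [List.mem_iff_getElem] at ha
    obtain ⟨k, hk, rfl⟩ := ha
    rw [List.getElem_drop]
    exact h _ (by simp at hk; omega) (by omega) (by omega)
  rw [h1, h2, mul_one]
end Lists


section Lists2
variable {A : Type*} [Monoid A] {n : ℕ}

lemma ofFn_prod_pair (g : Fin n → A) (p q : Fin n) (hpq : p.val < q.val)
    (h : ∀ k, k ≠ p → k ≠ q → g k = 1) :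
    (List.ofFn g).prod = g p * g q := by
  have hs := prod_pair' (List.ofFn g) p.val q.val hpq (by simp) ?_
  · simpa using hs
  · intro k hk hki hkj
    simp only [List.length_ofFn] at hk
    rw [List.getElem_ofFn]
    exact h ⟨k, hk⟩ (fun hh => hki (congrArg Fin.val hh)) (fun hh => hkj (congrArg Fin.val hh))

lemma ofFn_take_prod (g : Fin n → A) (p q : Fin n)
    (h : ∀ k, k ≠ p → k ≠ q → g k = 1) :
    ((List.ofFn g).take p.val).prod = if q.val < p.val then g q else 1 := by
  have hlen : ((List.ofFn g).take p.val).length = p.val := by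
    simp [Nat.min_eq_left p.isLt.le]
  split
  case isTrue hq =>
    have hs := prod_single' ((List.ofFn g).take p.val) q.val (by omega) ?_
    · rw [hs, List.getElem_take, List.getElem_ofFn]
    · intro k hk hkq
      rw [hlen] at hk
      rw [List.getElem_take, List.getElem_ofFn]
      exact h ⟨k, by omega⟩ (fun hh => absurd (congrArg Fin.val hh) (by simp; omega))
        (fun hh => hkq (congrArg Fin.val hh))
  case isFalse hq =>
    apply List.prod_eq_one
    intro a ha
    rw [List.mem_iff_getElem] at ha
    obtain ⟨k, hk, rfl⟩ := ha
    rw [hlen] at hk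
    rw [List.getElem_take, List.getElem_ofFn]
    exact h ⟨k, by omega⟩ (fun hh => absurd (congrArg Fin.val hh) (by simp; omega))
      (fun hh => absurd (congrArg Fin.val hh) (by simp; omega))

lemma ofFn_drop_prod (g : Fin n → A) (p q : Fin n)
    (h : ∀ k, k ≠ p → k ≠ q → g k = 1) :
    ((List.ofFn g).drop (p.val + 1)).prod = if p.val < q.val then g q else 1 := by
  have hlen : ((List.ofFn g).drop (p.val + 1)).length = n - (p.val + 1) := by simp
  split
  case isTrue hq =>
    have hs := prod_single' ((List.ofFn g).drop (p.val + 1)) (q.val - (p.val + 1))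
        (by rw [hlen]; have := q.isLt; omega) ?_
    · rw [hs, List.getElem_drop, List.getElem_ofFn]
      congr 1
      exact Fin.ext (by simp; omega)
    · intro k hk hkq
      rw [hlen] at hk
      rw [List.getElem_drop, List.getElem_ofFn]
      exact h ⟨p.val + 1 + k, by omega⟩
        (fun hh => absurd (congrArg Fin.val hh) (by simp; omega))
        (fun hh => absurd (congrArg Fin.val hh) (by simp; omega))
  case isFalse hq =>
    apply List.prod_eq_one
    intro a ha
    rw [List.mem_iff_getElem] at ha
    obtain ⟨k, hk, rfl⟩ := ha
    rw [hlen] at hk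
    rw [List.getElem_drop, List.getElem_ofFn]
    exact h ⟨p.val + 1 + k, by omega⟩
      (fun hh => absurd (congrArg Fin.val hh) (by simp; omega))
      (fun hh => absurd (congrArg Fin.val hh) (by simp; omega))
end Lists2


open MulOpposite


set_option linter.unusedSectionVars false

section Key
variable {R A M : Type*} [CommRing R] [Ring A] [Algebra R A]
    [AddCommGroup M] [Module R M]
    [Module A M] [Module Aᵐᵒᵖ M] [SMulCommClass A Aᵐᵒᵖ M]
    [IsScalarTower R A M] [IsScalarTower R Aᵐᵒᵖ M]

theorem key_one (m : ℕ) (α : Equiv.Perm (Fin (m+2)) → R) (G : A →ₗ[R] M)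
    (hG : ∀ x : Fin (m+2) → A,
      G (∑ π : Equiv.Perm (Fin (m+2)), α π • (List.ofFn fun j => x (π j)).prod)
        = ∑ i : Fin (m+2), ∑ π : Equiv.Perm (Fin (m+2)),
            α π • (((List.ofFn fun j => x (π j)).take (π.symm i).val).prod •
              (MulOpposite.op ((List.ofFn fun j => x (π j)).drop ((π.symm i).val + 1)).prod •
                G (x i))))
    (htf : ∀ v : M, (m + 1) • v = 0 → v = 0)
    (hreg : ∀ v : M, (∑ π : Equiv.Perm (Fin (m+2)), α π) • v = 0 → v = 0) :
    G 1 = 0 := by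
  have hA := hG (fun _ => (1:A))
  simp only [List.ofFn_const, List.prod_replicate, one_pow, List.take_replicate,
    List.drop_replicate, op_one, one_smul] at hA
  rw [← Finset.sum_smul, map_smul] at hA
  rw [← Finset.sum_smul, Finset.sum_const, Finset.card_univ, Fintype.card_fin] at hA
  set v := (∑ π : Equiv.Perm (Fin (m+2)), α π) • G 1 with hv
  have hz : (m + 1) • v = 0 := by
    rw [succ_nsmul v (m + 1)] at hA
    have h3 : (m + 1) • v + v = 0 + v := by rw [zero_add]; exact hA.symm
    exact add_right_cancel h3
  exact hreg _ (htf _ hz)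

theorem key_id (m : ℕ) (α : Equiv.Perm (Fin (m+2)) → R) (G : A →ₗ[R] M)
    (hG : ∀ x : Fin (m+2) → A,
      G (∑ π : Equiv.Perm (Fin (m+2)), α π • (List.ofFn fun j => x (π j)).prod)
        = ∑ i : Fin (m+2), ∑ π : Equiv.Perm (Fin (m+2)),
            α π • (((List.ofFn fun j => x (π j)).take (π.symm i).val).prod •
              (MulOpposite.op ((List.ofFn fun j => x (π j)).drop ((π.symm i).val + 1)).prod •
                G (x i))))
    (hone : G 1 = 0) (a b : A) :
    (∑ π ∈ Finset.univ.filter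
        (fun π : Equiv.Perm (Fin (m+2)) => (π.symm 0).val < (π.symm 1).val), α π) • G (a*b)
      + (∑ π ∈ Finset.univ.filter
        (fun π : Equiv.Perm (Fin (m+2)) => ¬ (π.symm 0).val < (π.symm 1).val), α π) • G (b*a)
    = ((∑ π ∈ Finset.univ.filter
        (fun π : Equiv.Perm (Fin (m+2)) => (π.symm 0).val < (π.symm 1).val), α π) • (op b • G a)
      + (∑ π ∈ Finset.univ.filter
        (fun π : Equiv.Perm (Fin (m+2)) => ¬ (π.symm 0).val < (π.symm 1).val), α π) • (b • G a))
      + ((∑ π ∈ Finset.univ.filter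
        (fun π : Equiv.Perm (Fin (m+2)) => (π.symm 0).val < (π.symm 1).val), α π) • (a • G b)
      + (∑ π ∈ Finset.univ.filter
        (fun π : Equiv.Perm (Fin (m+2)) => ¬ (π.symm 0).val < (π.symm 1).val), α π) • (op a • G b)) := by
  have h01 : (0 : Fin (m+2)) ≠ 1 := by
    intro hh
    have := congrArg Fin.val hh
    simp at this
  set x : Fin (m+2) → A := fun j => if j = 0 then a else if j = 1 then b else 1 with hxdef
  have hx0 : x 0 = a := by simp [hxdef]
  have hx1 : x 1 = b := by simp [hxdef, h01.symm]
  have hxo : ∀ j, j ≠ 0 → j ≠ 1 → x j = 1 := by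
    intro j hj0 hj1; simp [hxdef, hj0, hj1]
  have hne : ∀ π : Equiv.Perm (Fin (m+2)), π.symm 0 ≠ π.symm 1 :=
    fun π hh => h01 (π.symm.injective hh)
  have hg : ∀ π : Equiv.Perm (Fin (m+2)), ∀ k, k ≠ π.symm 0 → k ≠ π.symm 1 → x (π k) = 1 := by
    intro π k hk0 hk1
    refine hxo _ (fun hh => hk0 ?_) (fun hh => hk1 ?_)
    · rw [← hh, Equiv.symm_apply_apply]
    · rw [← hh, Equiv.symm_apply_apply]
  have h := hG x
  -- LHS products
  have hL : ∀ π : Equiv.Perm (Fin (m+2)), (List.ofFn fun j => x (π j)).prod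
      = if (π.symm 0).val < (π.symm 1).val then a * b else b * a := by
    intro π
    rcases lt_trichotomy (π.symm 0).val (π.symm 1).val with hlt | heq | hgt
    · rw [if_pos hlt, ofFn_prod_pair _ _ _ hlt (hg π)]
      simp [hx0, hx1]
    · exact absurd (Fin.ext heq) (hne π)
    · rw [if_neg (by omega), ofFn_prod_pair _ (π.symm 1) (π.symm 0) hgt
        (fun k h1 h0 => hg π k h0 h1)]
      simp [hx0, hx1]
  -- take/drop products for i = 0
  have hT0 : ∀ π : Equiv.Perm (Fin (m+2)),
      ((List.ofFn fun j => x (π j)).take (π.symm 0).val).prod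
        = if (π.symm 1).val < (π.symm 0).val then b else 1 := by
    intro π
    rw [ofFn_take_prod _ (π.symm 0) (π.symm 1) (hg π)]
    simp [hx1]
  have hD0 : ∀ π : Equiv.Perm (Fin (m+2)),
      ((List.ofFn fun j => x (π j)).drop ((π.symm 0).val + 1)).prod
        = if (π.symm 0).val < (π.symm 1).val then b else 1 := by
    intro π
    rw [ofFn_drop_prod _ (π.symm 0) (π.symm 1) (hg π)]
    simp [hx1]
  have hT1 : ∀ π : Equiv.Perm (Fin (m+2)),
      ((List.ofFn fun j => x (π j)).take (π.symm 1).val).prod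
        = if (π.symm 0).val < (π.symm 1).val then a else 1 := by
    intro π
    rw [ofFn_take_prod _ (π.symm 1) (π.symm 0) (fun k h1 h0 => hg π k h0 h1)]
    simp [hx0]
  have hD1 : ∀ π : Equiv.Perm (Fin (m+2)),
      ((List.ofFn fun j => x (π j)).drop ((π.symm 1).val + 1)).prod
        = if (π.symm 1).val < (π.symm 0).val then a else 1 := by
    intro π
    rw [ofFn_drop_prod _ (π.symm 1) (π.symm 0) (fun k h1 h0 => hg π k h0 h1)]
    simp [hx0]
  -- rewrite LHS of h
  rw [show (∑ π : Equiv.Perm (Fin (m+2)), α π • (List.ofFn fun j => x (π j)).prod)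
      = (∑ π ∈ Finset.univ.filter
          (fun π : Equiv.Perm (Fin (m+2)) => (π.symm 0).val < (π.symm 1).val), α π) • (a*b)
        + (∑ π ∈ Finset.univ.filter
          (fun π : Equiv.Perm (Fin (m+2)) => ¬ (π.symm 0).val < (π.symm 1).val), α π) • (b*a) by
    simp only [hL, smul_ite]
    rw [Finset.sum_ite, Finset.sum_smul, Finset.sum_smul]] at h
  rw [map_add, map_smul, map_smul] at h
  -- rewrite RHS of h : reduce the i-sum to i = 0 and i = 1
  rw [Fintype.sum_eq_add 0 1 h01 (fun i hi => Finset.sum_eq_zero (fun π _ => by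
    rw [hxo i hi.1 hi.2, hone, smul_zero, smul_zero, smul_zero]))] at h
  -- evaluate the i = 0 term
  rw [show (∑ π : Equiv.Perm (Fin (m+2)),
        α π • (((List.ofFn fun j => x (π j)).take (π.symm 0).val).prod •
          (op ((List.ofFn fun j => x (π j)).drop ((π.symm 0).val + 1)).prod • G (x 0))))
      = (∑ π ∈ Finset.univ.filter
          (fun π : Equiv.Perm (Fin (m+2)) => (π.symm 0).val < (π.symm 1).val), α π) • (op b • G a)
        + (∑ π ∈ Finset.univ.filter
          (fun π : Equiv.Perm (Fin (m+2)) => ¬ (π.symm 0).val < (π.symm 1).val), α π) • (b • G a) by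
    rw [Finset.sum_smul, Finset.sum_smul, ← Finset.sum_ite]
    apply Finset.sum_congr rfl
    intro π _
    rw [hT0 π, hD0 π, hx0]
    rcases lt_trichotomy (π.symm 0).val (π.symm 1).val with hlt | heq | hgt
    · simp only [if_pos hlt, if_neg (show ¬ (π.symm 1).val < (π.symm 0).val by omega), one_smul]
    · exact absurd (Fin.ext heq) (hne π)
    · simp only [if_neg (show ¬ (π.symm 0).val < (π.symm 1).val by omega), if_pos hgt,
        op_one, one_smul]] at h
  -- evaluate the i = 1 term
  rw [show (∑ π : Equiv.Perm (Fin (m+2)),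
        α π • (((List.ofFn fun j => x (π j)).take (π.symm 1).val).prod •
          (op ((List.ofFn fun j => x (π j)).drop ((π.symm 1).val + 1)).prod • G (x 1))))
      = (∑ π ∈ Finset.univ.filter
          (fun π : Equiv.Perm (Fin (m+2)) => (π.symm 0).val < (π.symm 1).val), α π) • (a • G b)
        + (∑ π ∈ Finset.univ.filter
          (fun π : Equiv.Perm (Fin (m+2)) => ¬ (π.symm 0).val < (π.symm 1).val), α π) • (op a • G b) by
    rw [Finset.sum_smul, Finset.sum_smul, ← Finset.sum_ite]
    apply Finset.sum_congr rfl
    intro π _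
    rw [hT1 π, hD1 π, hx1]
    rcases lt_trichotomy (π.symm 0).val (π.symm 1).val with hlt | heq | hgt
    · simp only [if_pos hlt, if_neg (show ¬ (π.symm 1).val < (π.symm 0).val by omega),
        op_one, one_smul]
    · exact absurd (Fin.ext heq) (hne π)
    · simp only [if_neg (show ¬ (π.symm 0).val < (π.symm 1).val by omega), if_pos hgt,
        one_smul]] at h
  exact h

theorem key_main (m : ℕ) (α : Equiv.Perm (Fin (m+2)) → R) (G : A →ₗ[R] M)
    (hG : ∀ x : Fin (m+2) → A,
      G (∑ π : Equiv.Perm (Fin (m+2)), α π • (List.ofFn fun j => x (π j)).prod)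
        = ∑ i : Fin (m+2), ∑ π : Equiv.Perm (Fin (m+2)),
            α π • (((List.ofFn fun j => x (π j)).take (π.symm i).val).prod •
              (MulOpposite.op ((List.ofFn fun j => x (π j)).drop ((π.symm i).val + 1)).prod •
                G (x i))))
    (htf : ∀ v : M, (m + 1) • v = 0 → v = 0)
    (hreg : ∀ v : M, (∑ π : Equiv.Perm (Fin (m+2)), α π) • v = 0 → v = 0)
    (a b : A) :
    G (a*b + b*a) = op b • G a + a • G b + op a • G b + b • G a := by
  have hone := key_one m α G hG htf hreg
  have h1 := key_id m α G hG hone a b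
  have h2 := key_id m α G hG hone b a
  have hsum : (∑ π ∈ Finset.univ.filter
        (fun π : Equiv.Perm (Fin (m+2)) => (π.symm 0).val < (π.symm 1).val), α π)
      + (∑ π ∈ Finset.univ.filter
        (fun π : Equiv.Perm (Fin (m+2)) => ¬ (π.symm 0).val < (π.symm 1).val), α π)
      = ∑ π : Equiv.Perm (Fin (m+2)), α π :=
    Finset.sum_filter_add_sum_filter_not _ _ _
  have h4 : (∑ π : Equiv.Perm (Fin (m+2)), α π) •
      (G (a*b + b*a) - (op b • G a + a • G b + op a • G b + b • G a)) = 0 := by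
    rw [← hsum, map_add]
    generalize op b • G a = u1 at h1 h2 ⊢
    generalize b • G a = u2 at h1 h2 ⊢
    generalize a • G b = u3 at h1 h2 ⊢
    generalize op a • G b = u4 at h1 h2 ⊢
    generalize G (a * b) = w1 at h1 h2 ⊢
    generalize G (b * a) = w2 at h1 h2 ⊢
    linear_combination (norm := module) h1 + h2
  exact sub_eq_zero.mp (hreg _ h4)

end Key




/-- Let `F : A × A → M` be an `f`-biderivation, where
`f(x₁,...,xₙ) = ∑_{π ∈ Sₙ} α_π x_{π(1)} ⋯ x_{π(n)}` is a fixed multilinear polynomial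
and `α = ∑_π α_π`.  If `α ≠ 0`, `M` is `(n-1)`-torsion free and `α` is `M`-regular,
then `F` is a Jordan biderivation. -/
theorem f_biderivation_is_jordan_biderivation
    (R A M : Type*) [CommRing R] [Ring A] [Algebra R A]
    [AddCommGroup M] [Module R M]
    [Module A M] [Module Aᵐᵒᵖ M] [SMulCommClass A Aᵐᵒᵖ M]
    [IsScalarTower R A M] [IsScalarTower R Aᵐᵒᵖ M]
    (n : ℕ) (hn : 2 ≤ n)
    (α : Equiv.Perm (Fin n) → R)
    (hα₀ : ∃ π : Equiv.Perm (Fin n), α π ≠ 0)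
    (F : A →ₗ[R] A →ₗ[R] M)
    -- `F` is an `f`-biderivation:
    (hF1 : ∀ (x : Fin n → A) (z : A),
      F (∑ π : Equiv.Perm (Fin n), α π • (List.ofFn fun j => x (π j)).prod) z
        = ∑ i : Fin n, ∑ π : Equiv.Perm (Fin n),
            α π • (((List.ofFn fun j => x (π j)).take (π.symm i).val).prod •
              (MulOpposite.op ((List.ofFn fun j => x (π j)).drop ((π.symm i).val + 1)).prod •
                F (x i) z)))
    (hF2 : ∀ (x : Fin n → A) (z : A),
      F z (∑ π : Equiv.Perm (Fin n), α π • (List.ofFn fun j => x (π j)).prod)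
        = ∑ i : Fin n, ∑ π : Equiv.Perm (Fin n),
            α π • (((List.ofFn fun j => x (π j)).take (π.symm i).val).prod •
              (MulOpposite.op ((List.ofFn fun j => x (π j)).drop ((π.symm i).val + 1)).prod •
                F z (x i))))
    -- `α ≠ 0`:
    (hα : (∑ π : Equiv.Perm (Fin n), α π) ≠ 0)
    -- `M` is `(n-1)`-torsion free:
    (htf : ∀ m : M, (n - 1) • m = 0 → m = 0)
    -- `α` is `M`-regular:
    (hreg : ∀ m : M, (∑ π : Equiv.Perm (Fin n), α π) • m = 0 → m = 0) :
    (∀ x y z : A, F (x * y + y * x) z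
        = MulOpposite.op y • F x z + x • F y z + MulOpposite.op x • F y z + y • F x z) ∧
    (∀ x y z : A, F z (x * y + y * x)
        = MulOpposite.op y • F z x + x • F z y + MulOpposite.op x • F z y + y • F z x) := by
  obtain ⟨m, rfl⟩ : ∃ m, n = m + 2 := ⟨n - 2, by omega⟩
  have htf' : ∀ v : M, (m + 1) • v = 0 → v = 0 := fun v hv => htf v (by simpa using hv)
  constructor
  · intro x y z
    have hk := key_main m α (F.flip z)
      (fun xs => by simpa using hF1 xs z) htf' hreg x y
    simpa using hk
  · intro x y z
    exact key_main m α (F z) (fun xs => hF2 xs z) htf' hreg x y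
end

section
/- Let F : A × A → M be an f-biderivation. If α ≠ 0, M is (n-1)-torsion free, and α is M-regular, then F(1, y) = 0 and F(y, 1) = 0 for all y ∈ A. -/
private lemma aux_nsmul_eq {M : Type*} [AddCommGroup M] {n : ℕ} (hn : 2 ≤ n) (m : M)
    (h : m = n • m) : (n - 1) • m = 0 := by
  have hn' : n - 1 + 1 = n := by omega
  have h2 : (n - 1) • m + m = 0 + m := by
    rw [zero_add, ← succ_nsmul, hn', ← h]
  exact add_right_cancel h2

/-- Let `F : A × A → M` be an `f`-biderivation, where
`f(x₁,...,xₙ) = ∑_{π ∈ Sₙ} α_π x_{π(1)} ⋯ x_{π(n)}` is a fixed multilinear polynomial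
and `α = ∑_π α_π`.  If `α ≠ 0`, `M` is `(n-1)`-torsion free and `α` is `M`-regular,
then `F(1,y) = 0` and `F(y,1) = 0` for all `y ∈ A`. -/
theorem f_biderivation_vanishes_at_one
    (R A M : Type*) [CommRing R] [Ring A] [Algebra R A]
    [AddCommGroup M] [Module R M]
    [Module A M] [Module Aᵐᵒᵖ M] [SMulCommClass A Aᵐᵒᵖ M]
    [IsScalarTower R A M] [IsScalarTower R Aᵐᵒᵖ M]
    (n : ℕ) (hn : 2 ≤ n)
    (α : Equiv.Perm (Fin n) → R)
    (hα₀ : ∃ π : Equiv.Perm (Fin n), α π ≠ 0)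
    (F : A →ₗ[R] A →ₗ[R] M)
    -- `F` is an `f`-biderivation:
    (hF1 : ∀ (x : Fin n → A) (z : A),
      F (∑ π : Equiv.Perm (Fin n), α π • (List.ofFn fun j => x (π j)).prod) z
        = ∑ i : Fin n, ∑ π : Equiv.Perm (Fin n),
            α π • (((List.ofFn fun j => x (π j)).take (π.symm i).val).prod •
              (MulOpposite.op ((List.ofFn fun j => x (π j)).drop ((π.symm i).val + 1)).prod •
                F (x i) z)))
    (hF2 : ∀ (x : Fin n → A) (z : A),
      F z (∑ π : Equiv.Perm (Fin n), α π • (List.ofFn fun j => x (π j)).prod)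
        = ∑ i : Fin n, ∑ π : Equiv.Perm (Fin n),
            α π • (((List.ofFn fun j => x (π j)).take (π.symm i).val).prod •
              (MulOpposite.op ((List.ofFn fun j => x (π j)).drop ((π.symm i).val + 1)).prod •
                F z (x i))))
    -- `α ≠ 0`:
    (hα : (∑ π : Equiv.Perm (Fin n), α π) ≠ 0)
    -- `M` is `(n-1)`-torsion free:
    (htf : ∀ m : M, (n - 1) • m = 0 → m = 0)
    -- `α` is `M`-regular:
    (hreg : ∀ m : M, (∑ π : Equiv.Perm (Fin n), α π) • m = 0 → m = 0) :
    ∀ y : A, F 1 y = 0 ∧ F y 1 = 0 := by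
  intro y
  have h1 := hF1 (fun _ => 1) y
  have h2 := hF2 (fun _ => 1) y
  simp only [List.ofFn_const, List.take_replicate, List.drop_replicate, List.prod_replicate,
    one_pow, one_smul, MulOpposite.op_one, map_sum, map_smul, LinearMap.sum_apply,
    LinearMap.smul_apply, Finset.sum_const, Finset.card_univ, Fintype.card_fin,
    ← Finset.sum_smul] at h1 h2
  constructor
  · exact hreg _ (htf _ (aux_nsmul_eq hn _ h1))
  · exact hreg _ (htf _ (aux_nsmul_eq hn _ h2))
end

section
/- Let J : A × A → A be a Jordan biderivation. Then [[x, y], J(x, y)] = 0 for all x, y ∈ A. -/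
/-- Let `J : A × A → A` be a Jordan biderivation.
Then `[[x, y], J(x, y)] = 0` for all `x, y ∈ A`. -/
theorem jordan_biderivation_commutator
    (R A : Type*) [CommRing R] [Ring A] [Algebra R A]
    -- `A` is 2-torsion free:
    (htf : ∀ x : A, x + x = 0 → x = 0)
    (J : A →ₗ[R] A →ₗ[R] A)
    -- `J` is a Jordan biderivation:
    (hJ1 : ∀ x y : A, J (x * x) y = x * J x y + J x y * x)
    (hJ2 : ∀ x y : A, J x (y * y) = y * J x y + J x y * y) :
    ∀ x y : A, (x * y - y * x) * J x y - J x y * (x * y - y * x) = 0 := by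
  intro x y
  have h1 : J (x * x) (y * y)
      = x * (y * J x y + J x y * y) + (y * J x y + J x y * y) * x := by
    rw [hJ1, hJ2]
  have h2 : J (x * x) (y * y)
      = y * (x * J x y + J x y * x) + (x * J x y + J x y * x) * y := by
    rw [hJ2, hJ1]
  have h := h1.symm.trans h2
  linear_combination (norm := noncomm_ring) h
end

section
/- Let J : A × A → A be a Jordan biderivation. Then [[x, y], J(e, e)] = 0 for all x, y ∈ A. -/
private lemma trick_jb {A : Type*} [Ring A] {a b c d : A} (h : c = d)
    (h2 : a - b = c - d) : a = b := by
  rw [h, sub_self, sub_eq_zero] at h2; exact h2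

private lemma offdiag_comm_jb {A : Type*} [Ring A] {e : A} (he : e * e = e) (a : A) :
    (a - ((a * e - e * a) * e - e * (a * e - e * a))) * e
      = e * (a - ((a * e - e * a) * e - e * (a * e - e * a))) := by
  have hee : ∀ b : A, e * (e * b) = e * b := fun b => by rw [← mul_assoc, he]
  simp only [sub_mul, mul_sub, mul_assoc, he, hee]
  abel

private lemma mixed_piece_jb {A : Type*} [Ring A] (e f a w : A) (hae : a * e = e * a)
    (key1 : ∀ v : A, (v * e - e * v) * f - f * (v * e - e * v) = 0) :
    (a * (w * e - e * w) - (w * e - e * w) * a) * f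
      - f * (a * (w * e - e * w) - (w * e - e * w) * a) = 0 := by
  have hq : a * (w * e - e * w) - (w * e - e * w) * a
      = (a * w - w * a) * e - e * (a * w - w * a) := by
    have hd : (a * (w * e - e * w) - (w * e - e * w) * a)
        - ((a * w - w * a) * e - e * (a * w - w * a))
        = (e * a - a * e) * w - w * (e * a - a * e) := by noncomm_ring
    rw [← hae, sub_self, zero_mul, mul_zero, sub_self] at hd
    exact sub_eq_zero.mp hd
  rw [hq]; exact key1 (a * w - w * a)

/-- Let `J : A × A → A` be a Jordan biderivation and `e` a nontrivial
idempotent of `A`.  Then `[[x, y], J(e, e)] = 0` for all `x, y ∈ A`. -/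
theorem jordan_biderivation_commutator_at_idempotent
    (R A : Type*) [CommRing R] [Ring A] [Algebra R A]
    -- `A` is 2-torsion free:
    (htf : ∀ x : A, x + x = 0 → x = 0)
    -- `e` is a nontrivial idempotent:
    (e : A) (he : e * e = e) (he0 : e ≠ 0) (he1 : e ≠ 1)
    (J : A →ₗ[R] A →ₗ[R] A)
    -- `J` is a Jordan biderivation:
    (hJ1 : ∀ x y : A, J (x * x) y = x * J x y + J x y * x)
    (hJ2 : ∀ x y : A, J x (y * y) = y * J x y + J x y * y) :
    ∀ x y : A, (x * y - y * x) * J e e - J e e * (x * y - y * x) = 0 := by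
  -- linearization in the first variable
  have lin1 : ∀ x z y : A, J (x * z + z * x) y
      = x * J z y + J z y * x + z * J x y + J x y * z := by
    intro x z y
    have h := hJ1 (x + z) y
    have e1 : (x + z) * (x + z) = x * x + (x * z + z * x) + z * z := by noncomm_ring
    rw [e1] at h
    simp only [map_add, LinearMap.add_apply] at h
    rw [hJ1 x y, hJ1 z y] at h
    simp only [map_add, LinearMap.add_apply]
    exact trick_jb h (by noncomm_ring)
  -- linearization in the second variable
  have lin2 : ∀ x y w : A, J x (y * w + w * y)
      = y * J x w + J x w * y + w * J x y + J x y * w := by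
    intro x y w
    have h := hJ2 x (y + w)
    have e1 : (y + w) * (y + w) = y * y + (y * w + w * y) + w * w := by noncomm_ring
    rw [e1] at h
    simp only [map_add] at h
    rw [hJ2 x y, hJ2 x w] at h
    simp only [map_add]
    exact trick_jb h (by noncomm_ring)
  -- the mixed identity
  have H : ∀ x z y w : A,
      (x * y - y * x) * J z w - J z w * (x * y - y * x)
      + ((x * w - w * x) * J z y - J z y * (x * w - w * x))
      + ((z * y - y * z) * J x w - J x w * (z * y - y * z))
      + ((z * w - w * z) * J x y - J x y * (z * w - w * z)) = 0 := by
    intro x z y w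
    have hA : J (x * z + z * x) (y * w + w * y)
        = x * (y * J z w + J z w * y + w * J z y + J z y * w)
          + (y * J z w + J z w * y + w * J z y + J z y * w) * x
          + z * (y * J x w + J x w * y + w * J x y + J x y * w)
          + (y * J x w + J x w * y + w * J x y + J x y * w) * z := by
      rw [lin1]
      simp only [lin2]
    have hB : J (x * z + z * x) (y * w + w * y)
        = y * (x * J z w + J z w * x + z * J x w + J x w * z)
          + (x * J z w + J z w * x + z * J x w + J x w * z) * y
          + w * (x * J z y + J z y * x + z * J x y + J x y * z)
          + (x * J z y + J z y * x + z * J x y + J x y * z) * w := by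
      rw [lin2]
      simp only [lin1]
    exact trick_jb (hA.symm.trans hB) (by noncomm_ring)
  -- key1 : f commutes with every [v,e]
  have key1 : ∀ v : A, (v * e - e * v) * J e e - J e e * (v * e - e * v) = 0 := by
    intro v
    apply htf
    exact trick_jb (H v e e e) (by noncomm_ring)
  -- key2 : f commutes with [a,b] when a,b commute with e
  have key2 : ∀ a b : A, a * e = e * a → b * e = e * b →
      (a * b - b * a) * J e e - J e e * (a * b - b * a) = 0 := by
    intro a b ha hb
    have h := H a e b e
    rw [ha, hb] at h
    exact trick_jb h (by noncomm_ring)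
  intro x y
  set x1 := (x * e - e * x) * e - e * (x * e - e * x) with hx1
  set x2 := x - x1 with hx2
  set y1 := (y * e - e * y) * e - e * (y * e - e * y) with hy1
  set y2 := y - y1 with hy2
  have hx2e : x2 * e = e * x2 := by rw [hx2, hx1]; exact offdiag_comm_jb he x
  have hy2e : y2 * e = e * y2 := by rw [hy2, hy1]; exact offdiag_comm_jb he y
  have hx1f : x1 * J e e - J e e * x1 = 0 := by rw [hx1]; exact key1 (x * e - e * x)
  have hy1f : y1 * J e e - J e e * y1 = 0 := by rw [hy1]; exact key1 (y * e - e * y)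
  have p1 : (x2 * y2 - y2 * x2) * J e e - J e e * (x2 * y2 - y2 * x2) = 0 :=
    key2 x2 y2 hx2e hy2e
  have p2 : (x2 * y1 - y1 * x2) * J e e - J e e * (x2 * y1 - y1 * x2) = 0 := by
    rw [hy1]; exact mixed_piece_jb e (J e e) x2 (y * e - e * y) hx2e key1
  have p3 : (x1 * y2 - y2 * x1) * J e e - J e e * (x1 * y2 - y2 * x1) = 0 := by
    have h := mixed_piece_jb e (J e e) y2 (x * e - e * x) hy2e key1
    rw [← hx1] at h
    exact trick_jb h.symm (by noncomm_ring)
  have p4 : (x1 * y1 - y1 * x1) * J e e - J e e * (x1 * y1 - y1 * x1) = 0 := by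
    have hq : (x1 * y1 - y1 * x1) * J e e - J e e * (x1 * y1 - y1 * x1)
        = x1 * (y1 * J e e - J e e * y1) + (x1 * J e e - J e e * x1) * y1
          - y1 * (x1 * J e e - J e e * x1) - (y1 * J e e - J e e * y1) * x1 := by
      noncomm_ring
    rw [hq, hx1f, hy1f]
    simp
  have hxs : x = x2 + x1 := by rw [hx2]; abel
  have hys : y = y2 + y1 := by rw [hy2]; abel
  rw [hxs, hys]
  have expand : ((x2 + x1) * (y2 + y1) - (y2 + y1) * (x2 + x1)) * J e e
      - J e e * ((x2 + x1) * (y2 + y1) - (y2 + y1) * (x2 + x1))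
      = ((x2 * y2 - y2 * x2) * J e e - J e e * (x2 * y2 - y2 * x2))
        + ((x2 * y1 - y1 * x2) * J e e - J e e * (x2 * y1 - y1 * x2))
        + ((x1 * y2 - y2 * x1) * J e e - J e e * (x1 * y2 - y2 * x1))
        + ((x1 * y1 - y1 * x1) * J e e - J e e * (x1 * y1 - y1 * x1)) := by
    noncomm_ring
  rw [expand, p1, p2, p3, p4]
  simp
end

section
/- Let J : A × A → A be a Jordan biderivation. Then J(e,e)·(exe') = 0, (exe')·J(e,e) = 0, (e'xe)·J(e,e) = 0, and J(e,e)·(e'xe) = 0 for all x ∈ A. -/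
/-- Let `J : A × A → A` be a Jordan biderivation and `e` a nontrivial
idempotent, `e' = 1 - e`.  Then `J(e,e)·(exe') = 0`, `(exe')·J(e,e) = 0`,
`(e'xe)·J(e,e) = 0` and `J(e,e)·(e'xe) = 0` for all `x ∈ A`. -/
theorem jordan_biderivation_Jee_kills_offdiagonal
    (R A : Type*) [CommRing R] [Ring A] [Algebra R A]
    -- `A` is 2-torsion free:
    (htf : ∀ x : A, x + x = 0 → x = 0)
    -- `e` is a nontrivial idempotent:
    (e : A) (he : e * e = e) (he0 : e ≠ 0) (he1 : e ≠ 1)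
    (J : A →ₗ[R] A →ₗ[R] A)
    -- `J` is a Jordan biderivation:
    (hJ1 : ∀ x y : A, J (x * x) y = x * J x y + J x y * x)
    (hJ2 : ∀ x y : A, J x (y * y) = y * J x y + J x y * y) :
    ∀ x : A,
      J e e * (e * x * (1 - e)) = 0 ∧
      (e * x * (1 - e)) * J e e = 0 ∧
      ((1 - e) * x * e) * J e e = 0 ∧
      J e e * ((1 - e) * x * e) = 0 := by
  intro x
  set d := J e e with hd_def
  -- `d = e*d + d*e`
  have hd : d = e * d + d * e := by
    have h := hJ1 e e; rw [he] at h; exact h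
  -- linearization of the second Jordan identity
  have hlin : ∀ y z : A, J e (y * z + z * y)
      = y * J e z + J e z * y + z * J e y + J e y * z := by
    intro y z
    have h := hJ2 e (y + z)
    have expand : (y + z) * (y + z) = y * y + (y * z + z * y) + z * z := by
      noncomm_ring
    rw [expand] at h
    simp only [map_add] at h ⊢
    rw [hJ2 e y, hJ2 e z] at h
    linear_combination (norm := noncomm_ring) h
  -- `J e c` satisfies the same relation for every `c`
  have hJe : ∀ c : A, J e c = e * J e c + J e c * e := by
    intro c
    have h := hJ1 e c; rw [he] at h; exact h
  -- key: for any `c` with `e*c + c*e = c`, we get `c*d + d*c = 0`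
  have key : ∀ c : A, e * c + c * e = c → c * d + d * c = 0 := by
    intro c hc
    have h2 := hlin e c
    rw [hc] at h2
    have h1 := hJe c
    linear_combination (norm := noncomm_ring) h1 - h2
  -- the element a = e*x*(1-e)
  have ha1 : e * (e * x * (1 - e)) = e * x * (1 - e) := by
    linear_combination (norm := noncomm_ring) he * (x * (1 - e))
  have ha2 : (e * x * (1 - e)) * e = 0 := by
    linear_combination (norm := noncomm_ring) -(e * x) * he
  have ka : (e * x * (1 - e)) * d + d * (e * x * (1 - e)) = 0 := by
    apply key
    rw [ha1, ha2, add_zero]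
  -- the element b = (1-e)*x*e
  have hb1 : ((1 - e) * x * e) * e = (1 - e) * x * e := by
    linear_combination (norm := noncomm_ring) ((1 - e) * x) * he
  have hb2 : e * ((1 - e) * x * e) = 0 := by
    linear_combination (norm := noncomm_ring) -(he * (x * e))
  have kb : ((1 - e) * x * e) * d + d * ((1 - e) * x * e) = 0 := by
    apply key
    rw [hb1, hb2, zero_add]
  set a := e * x * (1 - e) with ha_def
  set b := (1 - e) * x * e with hb_def
  -- Peirce projection for `a`
  have hade : a * d = a * d * e := by
    linear_combination (norm := noncomm_ring) a * hd + ha2 * d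
  have haproj : e * (a * d + d * a) * e = a * d := by
    have h1 : e * (a * d) * e = a * d := by
      linear_combination (norm := noncomm_ring) ha1 * (d * e) - hade
    have h2 : e * (d * a) * e = 0 := by
      linear_combination (norm := noncomm_ring) (e * d) * ha2
    linear_combination (norm := noncomm_ring) h1 + h2
  have had : a * d = 0 := by rw [← haproj, ka, mul_zero, zero_mul]
  have hda : d * a = 0 := by
    have h := ka; rw [had, zero_add] at h; exact h
  -- Peirce projection for `b`
  have hdbe : d * b = e * (d * b) := by
    linear_combination (norm := noncomm_ring) hd * b + d * hb2
  have hbproj : e * (b * d + d * b) * e = d * b := by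
    have h1 : e * (b * d) * e = 0 := by
      linear_combination (norm := noncomm_ring) hb2 * (d * e)
    have h2 : e * (d * b) * e = d * b := by
      linear_combination (norm := noncomm_ring) (e * d) * hb1 - hdbe
    linear_combination (norm := noncomm_ring) h1 + h2
  have hdb : d * b = 0 := by rw [← hbproj, kb, mul_zero, zero_mul]
  have hbd : b * d = 0 := by
    have h := kb; rw [hdb, add_zero] at h; exact h
  exact ⟨hda, had, hbd, hdb⟩
end

section
/- Let J : A × A → A be a Jordan biderivation. Then J = J₁ + J₂, where J₁(x, y) = [x, [y, J(e, e)]] for all x, y ∈ A, the element J(e,e) satisfies [[x, y], J(e,e)] = 0 for all x, y ∈ A (so that J₁ is an extremal biderivation whenever J(e,e) ∉ Z(A)), and J₂ = J - J₁ is a Jordan biderivation satisfying J₂(e, e) = 0. -/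
/-- Let `J : A × A → A` be a Jordan biderivation and `e` a nontrivial
idempotent.  Then `J = J₁ + J₂` where `J₁(x,y) = [x,[y,J(e,e)]]`, the element `J(e,e)`
satisfies `[[x,y],J(e,e)] = 0` for all `x, y` (so `J₁` is an extremal biderivation
whenever `J(e,e) ∉ Z(A)`), and `J₂ = J - J₁` is a Jordan biderivation with
`J₂(e,e) = 0`. -/
theorem jordan_biderivation_extremal_decomposition
    (R A : Type*) [CommRing R] [Ring A] [Algebra R A]
    -- `A` is 2-torsion free:
    (htf : ∀ x : A, x + x = 0 → x = 0)
    -- `e` is a nontrivial idempotent: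
    (e : A) (he : e * e = e) (he0 : e ≠ 0) (he1 : e ≠ 1)
    (J : A →ₗ[R] A →ₗ[R] A)
    -- `J` is a Jordan biderivation:
    (hJ1 : ∀ x y : A, J (x * x) y = x * J x y + J x y * x)
    (hJ2 : ∀ x y : A, J x (y * y) = y * J x y + J x y * y) :
    ∃ J₂ : A →ₗ[R] A →ₗ[R] A,
      -- `J = J₁ + J₂`, with `J₁(x, y) = [x, [y, J(e, e)]]`:
      (∀ x y : A, J x y
          = (x * (y * J e e - J e e * y) - (y * J e e - J e e * y) * x) + J₂ x y) ∧
      -- `[[x, y], J(e, e)] = 0` for all `x, y ∈ A`: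
      (∀ x y : A, (x * y - y * x) * J e e - J e e * (x * y - y * x) = 0) ∧
      -- `J₂` is a Jordan biderivation:
      (∀ x y : A, J₂ (x * x) y = x * J₂ x y + J₂ x y * x) ∧
      (∀ x y : A, J₂ x (y * y) = y * J₂ x y + J₂ x y * y) ∧
      -- `J₂(e, e) = 0`:
      J₂ e e = 0 := by
  have hee : ∀ t : A, e * (e * t) = e * t := fun t => by rw [← mul_assoc, he]
  -- linearized Jordan identities
  have lin1 : ∀ x z y : A, J (x*z + z*x) y
      = x * J z y + J z y * x + z * J x y + J x y * z := by
    intro x z y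
    have h := hJ1 (x+z) y
    have e1 : (x+z)*(x+z) = x*x + (x*z + z*x) + z*z := by noncomm_ring
    rw [e1] at h
    simp only [map_add, LinearMap.add_apply] at h ⊢
    linear_combination (norm := noncomm_ring) h - hJ1 x y - hJ1 z y
  have lin2 : ∀ x y w : A, J x (y*w + w*y)
      = y * J x w + J x w * y + w * J x y + J x y * w := by
    intro x y w
    have h := hJ2 x (y+w)
    have e1 : (y+w)*(y+w) = y*y + (y*w + w*y) + w*w := by noncomm_ring
    rw [e1] at h
    simp only [map_add, LinearMap.add_apply] at h ⊢
    linear_combination (norm := noncomm_ring) h - hJ2 x y - hJ2 x w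
  -- [[x,y], J x y] = 0
  have P0 : ∀ x y : A, (x*y - y*x) * J x y - J x y * (x*y - y*x) = 0 := by
    intro x y
    linear_combination (norm := noncomm_ring)
      hJ2 (x*x) y + y * hJ1 x y + hJ1 x y * y
      - hJ1 x (y*y) - x * hJ2 x y - hJ2 x y * x
  have P1 : ∀ x z y : A, (x*y - y*x) * J z y + (z*y - y*z) * J x y
      - J z y * (x*y - y*x) - J x y * (z*y - y*z) = 0 := by
    intro x z y
    have h := P0 (x+z) y
    simp only [map_add, LinearMap.add_apply] at h
    linear_combination (norm := noncomm_ring) h - P0 x y - P0 z y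
  have P2 : ∀ x z y w : A, (x*y - y*x) * J z w + (x*w - w*x) * J z y
      + (z*y - y*z) * J x w + (z*w - w*z) * J x y
      - J z w * (x*y - y*x) - J z y * (x*w - w*x)
      - J x w * (z*y - y*z) - J x y * (z*w - w*z) = 0 := by
    intro x z y w
    have h := P1 x z (y+w)
    simp only [map_add, LinearMap.add_apply] at h
    linear_combination (norm := noncomm_ring) h - P1 x z y - P1 x z w
  -- a := J e e commutes with [e, y]
  have A1 : ∀ y : A, (e*y - y*e) * J e e - J e e * (e*y - y*e) = 0 := by
    intro y
    have h := P2 e e y e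
    refine htf _ ?_
    linear_combination (norm := noncomm_ring) h
  -- "diagonal versus diagonal" case
  have I0 : ∀ u v : A, u*e = e*u → e*v = v*e →
      (u*v - v*u) * J e e - J e e * (u*v - v*u) = 0 := by
    intro u v h1 h2
    have h := P2 u e v e
    rw [h1, h2] at h
    linear_combination (norm := noncomm_ring) h
  -- off-diagonal elements commute with a
  have offC : ∀ w : A, e*w*e = 0 → (1-e)*w*(1-e) = 0 →
      w * J e e - J e e * w = 0 := by
    intro w hw1 hw2
    have h := A1 (e*w - w*e)
    have hw : e*(e*w - w*e) - (e*w - w*e)*e = w := by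
      linear_combination (norm := noncomm_ring) he * w + w * he - hw2 - hw1
    rw [hw] at h
    exact h
  -- hard case: u ∈ eA(1-e), v ∈ (1-e)Ae
  have hard : ∀ u v : A, e*u = u → u*e = 0 → e*v = 0 → v*e = v →
      (u*v - v*u) * J e e - J e e * (u*v - v*u) = 0 := by
    intro u v hu1 hu2 hv1 hv2
    have hu1' : ∀ t : A, e*(u*t) = u*t := fun t => by rw [← mul_assoc, hu1]
    have hu2' : ∀ t : A, u*(e*t) = 0 := fun t => by rw [← mul_assoc, hu2, zero_mul]
    have hv1' : ∀ t : A, e*(v*t) = 0 := fun t => by rw [← mul_assoc, hv1, zero_mul]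
    have hv2' : ∀ t : A, v*(e*t) = v*t := fun t => by rw [← mul_assoc, hv2]
    have hf : J e v = e * J e v + J e v * e := by
      have h := hJ1 e v; rwa [he] at h
    have hg : J u e = e * J u e + J u e * e := by
      have h := hJ2 u e; rwa [he] at h
    have E1 : J u v = u * J e v + J e v * u + e * J u v + J u v * e := by
      have h := lin1 u e v
      rw [hu2, hu1, zero_add] at h
      exact h
    have E2 : J u v = v * J u e + J u e * v + e * J u v + J u v * e := by
      have h := lin2 u v e
      rw [hv2, hv1, add_zero] at h
      exact h
    have E3 : u * J e v + J e v * u = v * J u e + J u e * v :=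
      add_right_cancel (add_right_cancel (E1.symm.trans E2))
    have h := congrArg (fun t => e * t * e) E3
    simp only [mul_add, add_mul, mul_assoc, hu1, hu2, hv1, hv2, hu1', hu2', hv1',
      hv2', he, hee, mul_zero, zero_mul, add_zero, zero_add] at h
    have t1 : u * J e v = u * (J e v * e) := by
      nth_rewrite 1 [hf]
      simp only [mul_add, add_mul, mul_assoc, hu1, hu2, hv1, hv2, hu1', hu2', hv1',
        hv2', he, hee, mul_zero, zero_mul, add_zero, zero_add]
    have t2 : J u e * v = e * (J u e * v) := by
      nth_rewrite 1 [hg]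
      simp only [mul_add, add_mul, mul_assoc, hu1, hu2, hv1, hv2, hu1', hu2', hv1',
        hv2', he, hee, mul_zero, zero_mul, add_zero, zero_add]
    have P11 : u * J e v = J u e * v := by rw [t1, t2]; exact h
    have P22 : J e v * u = v * J u e := by
      have h2 := E3
      rw [P11] at h2
      rw [add_comm (J u e * v) (J e v * u)] at h2
      exact add_right_cancel h2
    have I := P2 u e v e
    rw [hu1, hu2, hv1, hv2] at I
    linear_combination (norm := noncomm_ring) I + P11 - P22
  -- the central fact: [[x,y], J e e] = 0
  have F1 : ∀ x y : A, (x*y - y*x) * J e e - J e e * (x*y - y*x) = 0 := by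
    intro x y
    set x1 := e*x*e + (1-e)*x*(1-e) with hx1
    set x2 := e*x*(1-e) with hx2
    set x3 := (1-e)*x*e with hx3
    set y1 := e*y*e + (1-e)*y*(1-e) with hy1
    set y2 := e*y*(1-e) with hy2
    set y3 := (1-e)*y*e with hy3
    have hx : x = x1 + x2 + x3 := by rw [hx1, hx2, hx3]; noncomm_ring
    have hy : y = y1 + y2 + y3 := by rw [hy1, hy2, hy3]; noncomm_ring
    have expand : (x*y - y*x) * J e e - J e e * (x*y - y*x)
        = ((x1*y1 - y1*x1) * J e e - J e e * (x1*y1 - y1*x1))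
        + ((x1*y2 - y2*x1) * J e e - J e e * (x1*y2 - y2*x1))
        + ((x1*y3 - y3*x1) * J e e - J e e * (x1*y3 - y3*x1))
        + ((x2*y1 - y1*x2) * J e e - J e e * (x2*y1 - y1*x2))
        + ((x2*y2 - y2*x2) * J e e - J e e * (x2*y2 - y2*x2))
        + ((x2*y3 - y3*x2) * J e e - J e e * (x2*y3 - y3*x2))
        + ((x3*y1 - y1*x3) * J e e - J e e * (x3*y1 - y1*x3))
        + ((x3*y2 - y2*x3) * J e e - J e e * (x3*y2 - y2*x3))
        + ((x3*y3 - y3*x3) * J e e - J e e * (x3*y3 - y3*x3)) := by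
      rw [hx, hy]; noncomm_ring
    have c11 : (x1*y1 - y1*x1) * J e e - J e e * (x1*y1 - y1*x1) = 0 := by
      refine I0 x1 y1 ?_ ?_
      · rw [hx1]
        simp only [mul_add, add_mul, mul_sub, sub_mul, mul_one, one_mul, mul_assoc,
          he, hee, mul_zero, zero_mul, add_zero, zero_add]
        abel
      · rw [hy1]
        simp only [mul_add, add_mul, mul_sub, sub_mul, mul_one, one_mul, mul_assoc,
          he, hee, mul_zero, zero_mul, add_zero, zero_add]
        abel
    have c12 : (x1*y2 - y2*x1) * J e e - J e e * (x1*y2 - y2*x1) = 0 := by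
      refine offC _ ?_ ?_ <;>
      · rw [hx1, hy2]
        simp only [mul_add, add_mul, mul_sub, sub_mul, mul_one, one_mul, mul_assoc,
          he, hee, mul_zero, zero_mul, add_zero, zero_add]
        abel
    have c13 : (x1*y3 - y3*x1) * J e e - J e e * (x1*y3 - y3*x1) = 0 := by
      refine offC _ ?_ ?_ <;>
      · rw [hx1, hy3]
        simp only [mul_add, add_mul, mul_sub, sub_mul, mul_one, one_mul, mul_assoc,
          he, hee, mul_zero, zero_mul, add_zero, zero_add]
        abel
    have c21 : (x2*y1 - y1*x2) * J e e - J e e * (x2*y1 - y1*x2) = 0 := by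
      refine offC _ ?_ ?_ <;>
      · rw [hx2, hy1]
        simp only [mul_add, add_mul, mul_sub, sub_mul, mul_one, one_mul, mul_assoc,
          he, hee, mul_zero, zero_mul, add_zero, zero_add]
        abel
    have c31 : (x3*y1 - y1*x3) * J e e - J e e * (x3*y1 - y1*x3) = 0 := by
      refine offC _ ?_ ?_ <;>
      · rw [hx3, hy1]
        simp only [mul_add, add_mul, mul_sub, sub_mul, mul_one, one_mul, mul_assoc,
          he, hee, mul_zero, zero_mul, add_zero, zero_add]
        abel
    have c22 : (x2*y2 - y2*x2) * J e e - J e e * (x2*y2 - y2*x2) = 0 := by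
      have p : x2*y2 = 0 := by
        rw [hx2, hy2]
        simp only [mul_add, add_mul, mul_sub, sub_mul, mul_one, one_mul, mul_assoc,
          he, hee, mul_zero, zero_mul, add_zero, zero_add]
        abel
      have q : y2*x2 = 0 := by
        rw [hx2, hy2]
        simp only [mul_add, add_mul, mul_sub, sub_mul, mul_one, one_mul, mul_assoc,
          he, hee, mul_zero, zero_mul, add_zero, zero_add]
        abel
      rw [p, q]; simp
    have c33 : (x3*y3 - y3*x3) * J e e - J e e * (x3*y3 - y3*x3) = 0 := by
      have p : x3*y3 = 0 := by
        rw [hx3, hy3]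
        simp only [mul_add, add_mul, mul_sub, sub_mul, mul_one, one_mul, mul_assoc,
          he, hee, mul_zero, zero_mul, add_zero, zero_add]
        abel
      have q : y3*x3 = 0 := by
        rw [hx3, hy3]
        simp only [mul_add, add_mul, mul_sub, sub_mul, mul_one, one_mul, mul_assoc,
          he, hee, mul_zero, zero_mul, add_zero, zero_add]
        abel
      rw [p, q]; simp
    have e2u : e*x2 = x2 := by
      rw [hx2]
      simp only [mul_add, add_mul, mul_sub, sub_mul, mul_one, one_mul, mul_assoc,
        he, hee, mul_zero, zero_mul, add_zero, zero_add]
    have u2e : x2*e = 0 := by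
      rw [hx2]
      simp only [mul_add, add_mul, mul_sub, sub_mul, mul_one, one_mul, mul_assoc,
        he, hee, mul_zero, zero_mul, add_zero, zero_add]
      abel
    have e3u : e*x3 = 0 := by
      rw [hx3]
      simp only [mul_add, add_mul, mul_sub, sub_mul, mul_one, one_mul, mul_assoc,
        he, hee, mul_zero, zero_mul, add_zero, zero_add]
      abel
    have u3e : x3*e = x3 := by
      rw [hx3]
      simp only [mul_add, add_mul, mul_sub, sub_mul, mul_one, one_mul, mul_assoc,
        he, hee, mul_zero, zero_mul, add_zero, zero_add]
    have e2v : e*y2 = y2 := by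
      rw [hy2]
      simp only [mul_add, add_mul, mul_sub, sub_mul, mul_one, one_mul, mul_assoc,
        he, hee, mul_zero, zero_mul, add_zero, zero_add]
    have v2e : y2*e = 0 := by
      rw [hy2]
      simp only [mul_add, add_mul, mul_sub, sub_mul, mul_one, one_mul, mul_assoc,
        he, hee, mul_zero, zero_mul, add_zero, zero_add]
      abel
    have e3v : e*y3 = 0 := by
      rw [hy3]
      simp only [mul_add, add_mul, mul_sub, sub_mul, mul_one, one_mul, mul_assoc,
        he, hee, mul_zero, zero_mul, add_zero, zero_add]
      abel
    have v3e : y3*e = y3 := by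
      rw [hy3]
      simp only [mul_add, add_mul, mul_sub, sub_mul, mul_one, one_mul, mul_assoc,
        he, hee, mul_zero, zero_mul, add_zero, zero_add]
    have c23 : (x2*y3 - y3*x2) * J e e - J e e * (x2*y3 - y3*x2) = 0 :=
      hard x2 y3 e2u u2e e3v v3e
    have c32 : (x3*y2 - y2*x3) * J e e - J e e * (x3*y2 - y2*x3) = 0 := by
      have h := hard y2 x3 e2v v2e e3u u3e
      linear_combination (norm := noncomm_ring) -h
    rw [expand, c11, c12, c13, c21, c22, c23, c31, c32, c33]
    simp
  -- basic corner facts about a = J e e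
  have haa : J e e = e * J e e + J e e * e := by
    have h := hJ1 e e; rwa [he] at h
  have heae : e * J e e * e = 0 := by
    have h3 : e * J e e * e = e * J e e * e + e * J e e * e := by
      nth_rewrite 1 [haa]
      simp only [mul_add, add_mul, mul_assoc, he, hee]
    have h5 : e * J e e * e + e * J e e * e = e * J e e * e + 0 := by
      rw [add_zero]; exact h3.symm
    exact add_left_cancel h5
  -- auxiliary identity for the second Jordan condition
  have slot2aux : ∀ x y : A,
      (x*y - y*x) * (y * J e e - J e e * y)
      + (y * J e e - J e e * y) * (x*y - y*x) = 0 := by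
    intro x y
    have h1 := F1 x y
    have h2 := F1 x (y*y)
    linear_combination (norm := noncomm_ring) h2 - h1 * y - y * h1
  -- construct J₁
  set J1 : A →ₗ[R] A →ₗ[R] A := LinearMap.mk₂ R
    (fun x y => x * (y * J e e - J e e * y) - (y * J e e - J e e * y) * x)
    (fun m₁ m₂ n => by noncomm_ring)
    (fun c m n => by
      simp only [smul_mul_assoc, mul_smul_comm, smul_sub])
    (fun m n₁ n₂ => by noncomm_ring)
    (fun c m n => by
      simp only [mul_sub, sub_mul, smul_sub, smul_mul_assoc, mul_smul_comm, mul_assoc])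
    with hJ1def
  refine ⟨J - J1, ?_, F1, ?_, ?_, ?_⟩
  · intro x y
    simp only [hJ1def, LinearMap.sub_apply, LinearMap.mk₂_apply]
    abel
  · intro x y
    simp only [hJ1def, LinearMap.sub_apply, LinearMap.mk₂_apply]
    linear_combination (norm := noncomm_ring) hJ1 x y
  · intro x y
    simp only [hJ1def, LinearMap.sub_apply, LinearMap.mk₂_apply]
    linear_combination (norm := noncomm_ring) hJ2 x y - slot2aux x y
  · simp only [hJ1def, LinearMap.sub_apply, LinearMap.mk₂_apply]
    linear_combination (norm := noncomm_ring) haa - he * J e e - J e e * he + heae + heae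
end

section
/- Let J : A × A → A be a Jordan biderivation. Then J(xyx, z) = J(x,z)yx + xJ(y,z)x + xyJ(x,z) for all x, y, z ∈ A. -/
/-- Let `J : A × A → A` be a Jordan biderivation.
Then `J(xyx, z) = J(x,z)yx + xJ(y,z)x + xyJ(x,z)` for all `x, y, z ∈ A`. -/
theorem jordan_biderivation_triple_product
    (R A : Type*) [CommRing R] [Ring A] [Algebra R A]
    -- `A` is 2-torsion free:
    (htf : ∀ x : A, x + x = 0 → x = 0)
    (J : A →ₗ[R] A →ₗ[R] A)
    -- `J` is a Jordan biderivation: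
    (hJ1 : ∀ x y : A, J (x * x) y = x * J x y + J x y * x)
    (hJ2 : ∀ x y : A, J x (y * y) = y * J x y + J x y * y) :
    ∀ x y z : A, J (x * y * x) z = J x z * y * x + x * J y z * x + x * y * J x z := by
  intro x y z
  -- Linearization of the Jordan derivation property in the first variable.
  have lin : ∀ a b : A,
      J (a * b) z + J (b * a) z = a * J b z + J a z * b + b * J a z + J b z * a := by
    intro a b
    have h := hJ1 (a + b) z
    have e : (a + b) * (a + b) = a * a + (a * b + b * a) + b * b := by noncomm_ring
    rw [e] at h
    simp only [map_add, LinearMap.add_apply, hJ1] at h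
    linear_combination (norm := noncomm_ring) h
  have l1 := lin x (x * y + y * x)
  have l2 := lin (x * x) y
  have l3 := lin x y
  have hx := hJ1 x z
  rw [show x * (x * y + y * x) = x * x * y + x * y * x from by noncomm_ring,
      show (x * y + y * x) * x = x * y * x + y * (x * x) from by noncomm_ring] at l1
  simp only [map_add, LinearMap.add_apply] at l1
  rw [hx] at l2
  -- `l1` now says `2·J(xyx)z = 2·(target)`; use 2-torsion-freeness.
  have sum : (J (x * y * x) z - (J x z * y * x + x * J y z * x + x * y * J x z))
      + (J (x * y * x) z - (J x z * y * x + x * J y z * x + x * y * J x z)) = 0 := by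
    linear_combination (norm := noncomm_ring) l1 - l2 + x * l3 + l3 * x
  exact sub_eq_zero.mp (htf _ sum)
end

section
/- Let J : A × A → A be a Jordan biderivation with J(e, e) = 0. Then for all a, a' ∈ A₁₁ and b, b' ∈ A₂₂: J(a, a') = eJ(a, a')e, J(b, b') = e'J(b, b')e', and J(a, b) = 0 = J(b, a). -/
/-- Let `J : A × A → A` be a Jordan biderivation with `J(e,e) = 0`.
Then for all `a, a' ∈ A₁₁ = eAe` and `b, b' ∈ A₂₂ = e'Ae'` (`e' = 1 - e`):
`J(a,a') = eJ(a,a')e`, `J(b,b') = e'J(b,b')e'`, and `J(a,b) = 0 = J(b,a)`. -/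
theorem jordan_biderivation_diagonal_components
    (R A : Type*) [CommRing R] [Ring A] [Algebra R A]
    -- `A` is 2-torsion free:
    (htf : ∀ x : A, x + x = 0 → x = 0)
    -- `e` is a nontrivial idempotent:
    (e : A) (he : e * e = e) (he0 : e ≠ 0) (he1 : e ≠ 1)
    (J : A →ₗ[R] A →ₗ[R] A)
    -- `J` is a Jordan biderivation:
    (hJ1 : ∀ x y : A, J (x * x) y = x * J x y + J x y * x)
    (hJ2 : ∀ x y : A, J x (y * y) = y * J x y + J x y * y)
    -- `J(e, e) = 0`:
    (hJe : J e e = 0) :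
    ∀ a a' b b' : A,
      e * a * e = a → e * a' * e = a' →
      (1 - e) * b * (1 - e) = b → (1 - e) * b' * (1 - e) = b' →
      J a a' = e * J a a' * e ∧
      J b b' = (1 - e) * J b b' * (1 - e) ∧
      J a b = 0 ∧ J b a = 0 := by
  intro a a' b b' ha ha' hb hb'
  -- basic idempotent facts
  have hee' : e * (1 - e) = 0 := by rw [mul_sub, mul_one, he, sub_self]
  have he'e : (1 - e) * e = 0 := by rw [sub_mul, one_mul, he, sub_self]
  have he' : (1 - e) * (1 - e) = (1 - e) := by
    rw [mul_sub, mul_one, sub_mul, one_mul, he, sub_self, sub_zero]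
  -- linearizations
  have expand2 : ∀ x y w : A, J x (y*w + w*y)
      = y * J x w + J x w * y + w * J x y + J x y * w := by
    intro x y w
    have h1 := hJ2 x (y + w)
    have e1 : (y+w)*(y+w) = y*y + (y*w + w*y) + w*w := by noncomm_ring
    rw [e1] at h1
    simp only [map_add] at h1
    rw [map_add]
    linear_combination (norm := noncomm_ring) h1 - hJ2 x y - hJ2 x w
  have expand1 : ∀ x z y : A, J (x*z + z*x) y
      = x * J z y + J z y * x + z * J x y + J x y * z := by
    intro x z y
    have h1 := hJ1 (x + z) y
    have e1 : (x+z)*(x+z) = x*x + (x*z + z*x) + z*z := by noncomm_ring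
    rw [e1] at h1
    simp only [map_add, LinearMap.add_apply] at h1
    rw [map_add, LinearMap.add_apply]
    linear_combination (norm := noncomm_ring) h1 - hJ1 x y - hJ1 z y
  -- J 1 y = 0 and J x 1 = 0
  have hone1 : ∀ y : A, J 1 y = 0 := by
    intro y
    have h := hJ1 1 y
    rw [one_mul, one_mul, mul_one] at h
    exact add_eq_right.mp h.symm
  have hone2 : ∀ x : A, J x 1 = 0 := by
    intro x
    have h := hJ2 x 1
    rw [one_mul, one_mul, mul_one] at h
    exact add_eq_right.mp h.symm
  have hJ1e : ∀ y : A, J (1 - e) y = - J e y := by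
    intro y; rw [map_sub, LinearMap.sub_apply, hone1, zero_sub]
  have hJ2e : ∀ x : A, J x (1 - e) = - J x e := by
    intro x; rw [map_sub, hone2, zero_sub]
  -- J e y and J x e are off-diagonal
  have hF1 : ∀ y : A, J e y = e * J e y + J e y * e := by
    intro y; have := hJ1 e y; rwa [he] at this
  have hF2 : ∀ x : A, J x e = e * J x e + J x e * e := by
    intro x; have := hJ2 x e; rwa [he] at this
  -- zero lemmas
  have Z1 : ∀ w : A, e * w = w → w * e = w → J e w = 0 := by
    intro w h1 h2
    have h := expand2 e e w
    rw [h1, h2, map_add, hJe, mul_zero, zero_mul, add_zero, add_zero, ← hF1 w] at h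
    exact add_eq_right.mp h
  have Z2 : ∀ w : A, e * w = 0 → w * e = 0 → J e w = 0 := by
    intro w h1 h2
    have h := expand2 e e w
    rw [h1, h2, add_zero, map_zero, hJe, mul_zero, zero_mul, add_zero, add_zero] at h
    exact (hF1 w).trans h.symm
  have Z3 : ∀ z : A, e * z = z → z * e = z → J z e = 0 := by
    intro z h1 h2
    have h := expand1 e z e
    rw [h1, h2, map_add, LinearMap.add_apply, hJe, mul_zero, zero_mul, add_zero,
      add_zero, ← hF2 z] at h
    exact add_eq_right.mp h
  have Z4 : ∀ z : A, e * z = 0 → z * e = 0 → J z e = 0 := by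
    intro z h1 h2
    have h := expand1 e z e
    rw [h1, h2, add_zero, map_zero, LinearMap.zero_apply, hJe, mul_zero, zero_mul,
      add_zero, add_zero] at h
    exact (hF2 z).trans h.symm
  -- key cancellation lemma
  have key : ∀ f X : A, f * f = f → f * X + X * f = X + X → X = f * X * f := by
    intro f X hf h
    have h1 : f*(f*X) + f*(X*f) = f*X + f*X := by rw [← mul_add, h, mul_add]
    rw [← mul_assoc, hf] at h1
    have e1 : f*X = f*X*f := by rw [mul_assoc]; exact (add_left_cancel h1).symm
    have h2 : (f*X)*f + (X*f)*f = X*f + X*f := by rw [← add_mul, h, add_mul]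
    rw [mul_assoc X f f, hf] at h2
    have e2 : X*f = f*X*f := by exact (add_right_cancel h2).symm
    have h3 : (X - f*X*f) + (X - f*X*f) = 0 := by
      linear_combination (norm := noncomm_ring) e1 + e2 - h
    exact (sub_eq_zero.mp (htf _ h3))
  -- Peirce structure lemmas
  have S1 : ∀ z y : A, e * z = z → z * e = z → J e y = 0 → J z y = e * J z y * e := by
    intro z y h1 h2 h0
    have h := expand1 e z y
    rw [h1, h2, map_add, LinearMap.add_apply, h0, mul_zero, zero_mul, add_zero,
      add_zero] at h
    exact key e (J z y) he h.symm
  have S1' : ∀ z y : A, (1-e) * z = z → z * (1-e) = z → J e y = 0 →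
      J z y = (1-e) * J z y * (1-e) := by
    intro z y h1 h2 h0
    have h := expand1 (1-e) z y
    rw [h1, h2, map_add, LinearMap.add_apply, hJ1e, h0, neg_zero, mul_zero, zero_mul,
      add_zero, add_zero] at h
    exact key (1-e) (J z y) he' h.symm
  have S2 : ∀ x w : A, e * w = w → w * e = w → J x e = 0 → J x w = e * J x w * e := by
    intro x w h1 h2 h0
    have h := expand2 x e w
    rw [h1, h2, map_add, h0, mul_zero, zero_mul, add_zero, add_zero] at h
    exact key e (J x w) he h.symm
  have S2' : ∀ x w : A, (1-e) * w = w → w * (1-e) = w → J x e = 0 →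
      J x w = (1-e) * J x w * (1-e) := by
    intro x w h1 h2 h0
    have h := expand2 x (1-e) w
    rw [h1, h2, map_add, hJ2e, h0, neg_zero, mul_zero, zero_mul, add_zero, add_zero] at h
    exact key (1-e) (J x w) he' h.symm
  -- multiplication facts for a, a', b, b'
  have hea : e * a = a := by rw [← ha, ← mul_assoc, ← mul_assoc, he]
  have hae : a * e = a := by rw [← ha, mul_assoc, he]
  have hea' : e * a' = a' := by rw [← ha', ← mul_assoc, ← mul_assoc, he]
  have hae' : a' * e = a' := by rw [← ha', mul_assoc, he]
  have heb : e * b = 0 := by rw [← hb, ← mul_assoc, ← mul_assoc, hee', zero_mul, zero_mul]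
  have hbe : b * e = 0 := by rw [← hb, mul_assoc, he'e, mul_zero]
  have he'b : (1-e) * b = b := by rw [sub_mul, one_mul, heb, sub_zero]
  have hbe' : b * (1-e) = b := by rw [mul_sub, mul_one, hbe, sub_zero]
  have heb' : e * b' = 0 := by
    rw [← hb', ← mul_assoc, ← mul_assoc, hee', zero_mul, zero_mul]
  have hb'e : b' * e = 0 := by rw [← hb', mul_assoc, he'e, mul_zero]
  have he'b' : (1-e) * b' = b' := by rw [sub_mul, one_mul, heb', sub_zero]
  have hb'e' : b' * (1-e) = b' := by rw [mul_sub, mul_one, hb'e, sub_zero]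
  refine ⟨S1 a a' hea hae (Z1 a' hea' hae'), S1' b b' he'b hbe' (Z2 b' heb' hb'e), ?_, ?_⟩
  · have r1 : J a b = e * J a b * e := S1 a b hea hae (Z2 b heb hbe)
    have r2 : J a b = (1-e) * J a b * (1-e) := S2' a b he'b hbe' (Z3 a hea hae)
    calc J a b = e * J a b * e := r1
      _ = e * ((1-e) * J a b * (1-e)) * e := by rw [← r2]
      _ = (e * (1-e)) * (J a b * ((1-e) * e)) := by noncomm_ring
      _ = 0 := by rw [hee', zero_mul]
  · have r1 : J b a = (1-e) * J b a * (1-e) := S1' b a he'b hbe' (Z1 a hea hae)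
    have r2 : J b a = e * J b a * e := S2 b a hea hae (Z4 b heb hbe)
    calc J b a = e * J b a * e := r2
      _ = e * ((1-e) * J b a * (1-e)) * e := by rw [← r1]
      _ = (e * (1-e)) * (J b a * ((1-e) * e)) := by noncomm_ring
      _ = 0 := by rw [hee', zero_mul]
end

section
/- Let J : A × A → A be a Jordan biderivation with J(e, e) = 0. Then for all a ∈ A₁₁, b ∈ A₂₂ and m ∈ A₁₂: J(a, m) = aJ(e, m) + J(e, m)a, J(m, a) = aJ(m, e) + J(m, e)a, J(b, m) = bJ(e', m) + J(e', m)b, and J(m, b) = bJ(m, e') + J(m, e')b. -/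
/-- Key lemma: for an idempotent `f` with `J f f = 0`, any `a ∈ fAf` and any `m`
with `f*m*f = 0` and `f*m + m*f = m`, we have `J a m = a * J f m + J f m * a`. -/
lemma jbd_key {R A : Type*} [CommRing R] [Ring A] [Algebra R A]
    (htf : ∀ x : A, x + x = 0 → x = 0)
    (J : A →ₗ[R] A →ₗ[R] A)
    (hJ1 : ∀ x y : A, J (x * x) y = x * J x y + J x y * x)
    (hJ2 : ∀ x y : A, J x (y * y) = y * J x y + J x y * y)
    (f : A) (hf : f * f = f) (hJf : J f f = 0)
    (a m : A) (ha : f * a * f = a) (hmf : f * m * f = 0) (hm : f * m + m * f = m) :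
    J a m = a * J f m + J f m * a := by
  have half : ∀ x y : A, x + x = y + y → x = y := by
    intro x y h
    have h0 : (x - y) + (x - y) = 0 := by linear_combination (norm := noncomm_ring) h
    exact sub_eq_zero.mp (htf _ h0)
  have fa : f * a = a := by
    conv_lhs => rw [← ha]
    rw [show f * (f * a * f) = (f * f) * a * f by noncomm_ring, hf, ha]
  have af : a * f = a := by
    conv_lhs => rw [← ha]
    rw [show (f * a * f) * f = f * a * (f * f) by noncomm_ring, hf, ha]
  -- polarization in the first variable
  have polar1 : ∀ x y z : A, J (x*y + y*x) z
      = x * J y z + J y z * x + y * J x z + J x z * y := by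
    intro x y z
    have h := hJ1 (x + y) z
    rw [show (x+y)*(x+y) = x*x + (x*y + y*x) + y*y by noncomm_ring] at h
    simp only [map_add, LinearMap.add_apply] at h ⊢
    rw [hJ1 x z, hJ1 y z] at h
    linear_combination (norm := noncomm_ring) h
  -- polarization in the second variable
  have polar2 : ∀ x y z : A, J z (x*y + y*x)
      = x * J z y + J z y * x + y * J z x + J z x * y := by
    intro x y z
    have h := hJ2 z (x + y)
    rw [show (x+y)*(x+y) = x*x + (x*y + y*x) + y*y by noncomm_ring] at h
    simp only [map_add] at h ⊢
    rw [hJ2 z x, hJ2 z y] at h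
    linear_combination (norm := noncomm_ring) h
  set u := J a m with hu
  set v := J f m with hv0
  set w := J a f with hw0
  -- v = f*v + v*f, hence f*v*f = 0
  have hvsplit : v = f * v + v * f := by
    have := hJ1 f m; rw [hf] at this; exact this
  have hv : f * v * f = 0 := by
    have hstep : f * v * f = f * v * f + f * v * f := by
      linear_combination (norm := noncomm_ring) f * hvsplit * f + hf * v * f + f * v * hf
    exact (add_left_cancel (hstep.symm.trans (add_zero _).symm))
  -- w + w = f*w + w*f
  have hwsplit : w + w = f * w + w * f := by
    have h := polar1 f a f
    rw [fa, af, hJf] at h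
    simp only [map_add, LinearMap.add_apply, mul_zero, zero_mul, add_zero] at h
    exact h
  have hfw : f * w + f * w = f * w + f * (w * f) := by
    linear_combination (norm := noncomm_ring) f * hwsplit + hf * w
  have hfw' : f * w = f * (w * f) := add_left_cancel hfw
  have hwf : w * f + w * f = w * f + f * (w * f) := by
    linear_combination (norm := noncomm_ring) hwsplit * f + w * hf
  have hwf' : w * f = f * (w * f) := add_left_cancel hwf
  -- u = f*u + u*f + m*w + w*m
  have h3 : u = f * u + u * f + m * w + w * m := by
    have h := polar2 f m a
    rw [hm] at h
    exact h
  -- f*u*f = 0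
  have E2 : f * u * f = 0 := by
    have hstep : f * u * f = f * u * f + f * u * f := by
      linear_combination (norm := noncomm_ring)
        f * h3 * f + hf * u * f + f * u * hf + f * m * hwf' + hmf * (w * f)
          + hfw' * (m * f) + f * w * hmf
    exact (add_left_cancel (hstep.symm.trans (add_zero _).symm))
  -- u + u = f*u + u*f + a*v + v*a
  have h1 : u + u = f * u + u * f + a * v + v * a := by
    have h := polar1 f a m
    rw [fa, af] at h
    simp only [map_add, LinearMap.add_apply] at h
    exact h
  have fu : f * u + f * u = f * u + a * v := by
    linear_combination (norm := noncomm_ring) f * h1 + hf * u + E2 + fa * v - f * v * fa + hv * a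
  have fu' : f * u = a * v := add_left_cancel fu
  have uf : u * f + u * f = u * f + v * a := by
    linear_combination (norm := noncomm_ring) h1 * f + u * hf + E2 + v * af - af * (v * f) + a * hv
  have uf' : u * f = v * a := add_left_cancel uf
  exact half u (a * v + v * a) (by linear_combination (norm := noncomm_ring) h1 + fu' + uf')

/-- Let `J : A × A → A` be a Jordan biderivation with `J(e,e) = 0`.
Then for all `a ∈ A₁₁ = eAe`, `b ∈ A₂₂ = e'Ae'` and `m ∈ A₁₂ = eAe'` (`e' = 1 - e`):
`J(a,m) = aJ(e,m) + J(e,m)a`, `J(m,a) = aJ(m,e) + J(m,e)a`,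
`J(b,m) = bJ(e',m) + J(e',m)b`, and `J(m,b) = bJ(m,e') + J(m,e')b`. -/
theorem jordan_biderivation_components_with_m
    (R A : Type*) [CommRing R] [Ring A] [Algebra R A]
    -- `A` is 2-torsion free:
    (htf : ∀ x : A, x + x = 0 → x = 0)
    -- `e` is a nontrivial idempotent:
    (e : A) (he : e * e = e) (he0 : e ≠ 0) (he1 : e ≠ 1)
    (J : A →ₗ[R] A →ₗ[R] A)
    -- `J` is a Jordan biderivation:
    (hJ1 : ∀ x y : A, J (x * x) y = x * J x y + J x y * x)
    (hJ2 : ∀ x y : A, J x (y * y) = y * J x y + J x y * y)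
    -- `J(e, e) = 0`:
    (hJe : J e e = 0) :
    ∀ a b m : A,
      e * a * e = a → (1 - e) * b * (1 - e) = b → e * m * (1 - e) = m →
      J a m = a * J e m + J e m * a ∧
      J m a = a * J m e + J m e * a ∧
      J b m = b * J (1 - e) m + J (1 - e) m * b ∧
      J m b = b * J m (1 - e) + J m (1 - e) * b := by
  intro a b m ha hb hm
  -- the flipped map is also a Jordan biderivation
  have hJ1' : ∀ x y : A, J.flip (x * x) y = x * J.flip x y + J.flip x y * x := by
    intro x y; simpa using hJ2 y x
  have hJ2' : ∀ x y : A, J.flip x (y * y) = y * J.flip x y + J.flip x y * y := by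
    intro x y; simpa using hJ1 y x
  have hJe'' : J.flip e e = 0 := by rw [LinearMap.flip_apply]; exact hJe
  -- J 1 y = 0 and J x 1 = 0
  have hJ1A : ∀ y : A, J 1 y = 0 := by
    intro y
    have h := hJ1 1 y
    rw [one_mul, one_mul, mul_one] at h
    exact (add_left_cancel (h.symm.trans (add_zero _).symm))
  have hJ2A : ∀ x : A, J x 1 = 0 := by
    intro x
    have h := hJ2 x 1
    rw [one_mul, one_mul, mul_one] at h
    exact (add_left_cancel (h.symm.trans (add_zero _).symm))
  have hJe' : J (1 - e) (1 - e) = 0 := by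
    simp [map_sub, LinearMap.sub_apply, hJ1A, hJ2A, hJe]
  have hJe''' : J.flip (1 - e) (1 - e) = 0 := by rw [LinearMap.flip_apply]; exact hJe'
  have he' : (1 - e) * (1 - e) = (1 - e) := by
    linear_combination (norm := noncomm_ring) he
  -- Peirce facts about m
  have hme : m * e = 0 := by
    rw [← hm, show (e*m*(1-e))*e = e*m*(e - e*e) by noncomm_ring, he, sub_self, mul_zero]
  have hem : e * m = m := by
    conv_lhs => rw [← hm]
    rw [show e*(e*m*(1-e)) = (e*e)*m*(1-e) by noncomm_ring, he, hm]
  have hmf : e * m * e = 0 := by rw [mul_assoc, hme, mul_zero]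
  have hmsum : e * m + m * e = m := by rw [hem, hme, add_zero]
  have h1m : (1 - e) * m = 0 := by rw [sub_mul, one_mul, hem, sub_self]
  have hmf' : (1 - e) * m * (1 - e) = 0 := by rw [h1m, zero_mul]
  have hmsum' : (1 - e) * m + m * (1 - e) = m := by
    rw [h1m, zero_add, mul_sub, mul_one, hme, sub_zero]
  refine ⟨?_, ?_, ?_, ?_⟩
  · exact jbd_key htf J hJ1 hJ2 e he hJe a m ha hmf hmsum
  · have := jbd_key htf J.flip hJ1' hJ2' e he hJe'' a m ha hmf hmsum
    simpa using this
  · exact jbd_key htf J hJ1 hJ2 (1 - e) he' hJe' b m hb hmf' hmsum'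
  · have := jbd_key htf J.flip hJ1' hJ2' (1 - e) he' hJe''' b m hb hmf' hmsum'
    simpa using this
end

section
/- Let J : A × A → A be a Jordan biderivation with J(e, e) = 0. Then for all a ∈ A₁₁, b ∈ A₂₂ and n ∈ A₂₁: J(a, n) = aJ(e, n) + J(e, n)a, J(n, a) = aJ(n, e) + J(n, e)a, J(b, n) = bJ(e', n) + J(e', n)b, and J(n, b) = bJ(n, e') + J(n, e')b. -/
/-- Let `J : A × A → A` be a Jordan biderivation with `J(e,e) = 0`.
Then for all `a ∈ A₁₁ = eAe`, `b ∈ A₂₂ = e'Ae'` and `n ∈ A₂₁ = e'Ae` (`e' = 1 - e`):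
`J(a,n) = aJ(e,n) + J(e,n)a`, `J(n,a) = aJ(n,e) + J(n,e)a`,
`J(b,n) = bJ(e',n) + J(e',n)b`, and `J(n,b) = bJ(n,e') + J(n,e')b`. -/
theorem jordan_biderivation_components_with_n
    (R A : Type*) [CommRing R] [Ring A] [Algebra R A]
    -- `A` is 2-torsion free:
    (htf : ∀ x : A, x + x = 0 → x = 0)
    -- `e` is a nontrivial idempotent:
    (e : A) (he : e * e = e) (he0 : e ≠ 0) (he1 : e ≠ 1)
    (J : A →ₗ[R] A →ₗ[R] A)
    -- `J` is a Jordan biderivation: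
    (hJ1 : ∀ x y : A, J (x * x) y = x * J x y + J x y * x)
    (hJ2 : ∀ x y : A, J x (y * y) = y * J x y + J x y * y)
    -- `J(e, e) = 0`:
    (hJe : J e e = 0) :
    ∀ a b n : A,
      e * a * e = a → (1 - e) * b * (1 - e) = b → (1 - e) * n * e = n →
      J a n = a * J e n + J e n * a ∧
      J n a = a * J n e + J n e * a ∧
      J b n = b * J (1 - e) n + J (1 - e) n * b ∧
      J n b = b * J n (1 - e) + J n (1 - e) * b := by
  -- Polarized versions of the Jordan biderivation identities
  have P1 : ∀ x z y : A, J (x*z + z*x) y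
      = x * J z y + J z y * x + z * J x y + J x y * z := by
    intro x z y
    have h := hJ1 (x + z) y
    rw [add_mul, mul_add, mul_add] at h
    simp only [map_add, LinearMap.add_apply, mul_add, add_mul] at h
    rw [hJ1 x y, hJ1 z y] at h
    simp only [map_add, LinearMap.add_apply]
    linear_combination (norm := abel1) h
  have P2 : ∀ x y z : A, J x (y*z + z*y)
      = y * J x z + J x z * y + z * J x y + J x y * z := by
    intro x y z
    have h := hJ2 x (y + z)
    rw [add_mul, mul_add, mul_add] at h
    simp only [map_add, LinearMap.add_apply, mul_add, add_mul] at h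
    rw [hJ2 x y, hJ2 x z] at h
    simp only [map_add, LinearMap.add_apply]
    linear_combination (norm := abel1) h
  -- Key lemma: for any idempotent p with J p p = 0
  have key : ∀ p x n : A, p*p = p → J p p = 0 → p*x = x → x*p = x → p*n + n*p = n →
      J x n = x * J p n + J p n * x ∧ J n x = x * J n p + J n p * x := by
    intro p x n hp hJp hpx hxp hn
    have hxpa : J x p = 0 := by
      have h1 := hJ2 x p
      rw [hp] at h1
      have h2 := P1 p x p
      rw [hpx, hxp, hJp] at h2
      simp only [map_add, LinearMap.add_apply, mul_zero, zero_mul, add_zero] at h2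
      linear_combination (norm := abel1) h2 - h1
    have hpxa : J p x = 0 := by
      have h1 := hJ1 p x
      rw [hp] at h1
      have h2 := P2 p p x
      rw [hpx, hxp, hJp] at h2
      simp only [map_add, LinearMap.add_apply, mul_zero, zero_mul, add_zero] at h2
      linear_combination (norm := abel1) h2 - h1
    constructor
    · have R1 := P1 p x n
      rw [hpx, hxp] at R1
      simp only [map_add, LinearMap.add_apply] at R1
      have R2 := P2 x p n
      rw [hn, hxpa] at R2
      simp only [mul_zero, zero_mul, add_zero] at R2
      linear_combination (norm := abel1) R1 - R2
    · have R1 := P2 n p x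
      rw [hpx, hxp] at R1
      simp only [map_add, LinearMap.add_apply] at R1
      have R2 := P1 p n x
      rw [hn, hpxa] at R2
      simp only [mul_zero, zero_mul, add_zero] at R2
      linear_combination (norm := abel1) R1 - R2
  intro a b n ha hb hn
  -- basic facts
  have hea : e * a = a := by
    conv_lhs => rw [← ha]
    rw [show e * (e * a * e) = e * e * a * e from by noncomm_ring, he, ha]
  have hae : a * e = a := by
    conv_lhs => rw [← ha]
    rw [show e * a * e * e = e * a * (e * e) from by noncomm_ring, he, ha]
  have hen : e * n = 0 := by
    rw [← hn, show e*((1-e)*n*e) = (e*(1-e))*n*e from by noncomm_ring,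
      show e*(1-e) = 0 from by rw [mul_sub, mul_one, he, sub_self], zero_mul, zero_mul]
  have hne : n * e = n := by
    conv_lhs => rw [← hn]
    rw [show (1-e) * n * e * e = (1-e) * n * (e * e) from by noncomm_ring, he, hn]
  have hp : (1-e)*(1-e) = 1-e := by
    rw [show (1-e)*(1-e) = 1 - e - e + e*e from by noncomm_ring, he]
    abel
  have hJ1y : ∀ y : A, J 1 y = 0 := by
    intro y
    have h := hJ1 1 y
    rw [one_mul, one_mul, mul_one] at h
    linear_combination (norm := abel1) -h
  have hJx1 : ∀ x : A, J x 1 = 0 := by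
    intro x
    have h := hJ2 x 1
    rw [one_mul, one_mul, mul_one] at h
    linear_combination (norm := abel1) -h
  have hJp : J (1-e) (1-e) = 0 := by
    simp only [map_sub, LinearMap.sub_apply, hJ1y, hJx1, hJe, sub_zero, zero_sub, neg_zero]
  have heb : (1-e) * b = b := by
    conv_lhs => rw [← hb]
    rw [show (1-e) * ((1-e) * b * (1-e)) = (1-e) * (1-e) * b * (1-e) from by noncomm_ring,
      hp, hb]
  have hbe : b * (1-e) = b := by
    conv_lhs => rw [← hb]
    rw [show (1-e) * b * (1-e) * (1-e) = (1-e) * b * ((1-e) * (1-e)) from by noncomm_ring,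
      hp, hb]
  have h1 := key e a n he hJe hea hae (by rw [hen, hne, zero_add])
  have h2 := key (1-e) b n hp hJp heb hbe (by
    rw [sub_mul, mul_sub, one_mul, mul_one, hen, hne, sub_zero, sub_self, add_zero])
  exact ⟨h1.1, h1.2, h2.1, h2.2⟩
end

section
/- Let J : A × A → A be a Jordan biderivation with J(e, e) = 0. Then for all m ∈ A₁₂ and n ∈ A₂₁: J(m, n) = eJ(m, n)e' + e'J(m, n)e + [J(e, n), m] = eJ(m, n)e' + e'J(m, n)e + [n, J(m, e)], and J(n, m) = eJ(n, m)e' + e'J(n, m)e + [J(n, e), m] = eJ(n, m)e' + e'J(n, m)e + [n, J(e, m)]. -/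
/-- Auxiliary: for `m ∈ A₁₂`, any `P` satisfying the linearized Jordan identity
`P = eP + Pe + mD + Dm` with `D = eD + De` has the claimed decomposition. -/
private lemma aux12 {A : Type*} [Ring A] (e D P m : A) (he : e * e = e)
    (hm : e * m * (1 - e) = m)
    (hD : D = e * D + D * e)
    (hE : P = e * P + P * e + m * D + D * m) :
    P = e * P * (1 - e) + (1 - e) * P * e + (D * m - m * D) := by
  have hme : m * e = 0 := by
    linear_combination (norm := noncomm_ring) (-(hm * e)) - e * m * he
  have hem : e * m = m := by
    linear_combination (norm := noncomm_ring) hm + e * hme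
  have h1 : e * D * e = 0 := by
    linear_combination (norm := noncomm_ring) (-(e * hD * e)) - he * (D * e) - e * D * he
  have h2 : (1 - e) * D * (1 - e) = 0 := by
    linear_combination (norm := noncomm_ring) hD + h1
  have hmD1 : m * D * (1 - e) = 0 := by
    linear_combination (norm := noncomm_ring) m * h2 + hme * (D * (1 - e))
  have hDm1 : e * D * m = 0 := by
    linear_combination (norm := noncomm_ring) h1 * m - e * D * hem
  have hePe : e * P * e + m * D = 0 := by
    linear_combination (norm := noncomm_ring)
      (-(e * hE * e)) - he * (P * e) - e * P * he - hem * (D * e) - e * D * hme + hmD1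
  linear_combination (norm := noncomm_ring) hE + 2 * hePe

/-- Auxiliary: for `n ∈ A₂₁`, any `P` satisfying the linearized Jordan identity
`P = eP + Pe + nD + Dn` with `D = eD + De` has the claimed decomposition. -/
private lemma aux21 {A : Type*} [Ring A] (e D P n : A) (he : e * e = e)
    (hn : (1 - e) * n * e = n)
    (hD : D = e * D + D * e)
    (hE : P = e * P + P * e + n * D + D * n) :
    P = e * P * (1 - e) + (1 - e) * P * e + (n * D - D * n) := by
  have hen : e * n = 0 := by
    linear_combination (norm := noncomm_ring) (-(e * hn)) - he * (n * e)
  have hne : n * e = n := by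
    linear_combination (norm := noncomm_ring) hn + hen * e
  have h1 : e * D * e = 0 := by
    linear_combination (norm := noncomm_ring) (-(e * hD * e)) - he * (D * e) - e * D * he
  have h2 : (1 - e) * D * (1 - e) = 0 := by
    linear_combination (norm := noncomm_ring) hD + h1
  have hnDe : n * D * e = 0 := by
    linear_combination (norm := noncomm_ring) n * h1 - hne * (D * e)
  have he'Dn : (1 - e) * D * n = 0 := by
    linear_combination (norm := noncomm_ring) h2 * n + D * hen - e * D * hen
  have hePe : e * P * e + D * n = 0 := by
    linear_combination (norm := noncomm_ring)
      (-(e * hE * e)) - he * (P * e) - e * P * he - hen * (D * e) - e * D * hne + he'Dn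
  linear_combination (norm := noncomm_ring) hE + 2 * hePe

/-- Let `J : A × A → A` be a Jordan biderivation with `J(e,e) = 0`.
Then for all `m ∈ A₁₂ = eAe'` and `n ∈ A₂₁ = e'Ae` (`e' = 1 - e`):
`J(m,n) = eJ(m,n)e' + e'J(m,n)e + [J(e,n), m] = eJ(m,n)e' + e'J(m,n)e + [n, J(m,e)]`
and
`J(n,m) = eJ(n,m)e' + e'J(n,m)e + [J(n,e), m] = eJ(n,m)e' + e'J(n,m)e + [n, J(e,m)]`. -/
theorem jordan_biderivation_mixed_mn_components
    (R A : Type*) [CommRing R] [Ring A] [Algebra R A]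
    -- `A` is 2-torsion free:
    (htf : ∀ x : A, x + x = 0 → x = 0)
    -- `e` is a nontrivial idempotent:
    (e : A) (he : e * e = e) (he0 : e ≠ 0) (he1 : e ≠ 1)
    (J : A →ₗ[R] A →ₗ[R] A)
    -- `J` is a Jordan biderivation:
    (hJ1 : ∀ x y : A, J (x * x) y = x * J x y + J x y * x)
    (hJ2 : ∀ x y : A, J x (y * y) = y * J x y + J x y * y)
    -- `J(e, e) = 0`:
    (hJe : J e e = 0) :
    ∀ m n : A,
      e * m * (1 - e) = m → (1 - e) * n * e = n →
      J m n = e * J m n * (1 - e) + (1 - e) * J m n * e + (J e n * m - m * J e n) ∧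
      J m n = e * J m n * (1 - e) + (1 - e) * J m n * e + (n * J m e - J m e * n) ∧
      J n m = e * J n m * (1 - e) + (1 - e) * J n m * e + (J n e * m - m * J n e) ∧
      J n m = e * J n m * (1 - e) + (1 - e) * J n m * e + (n * J e m - J e m * n) := by
  intro m n hm hn
  -- linearized Jordan identity in the first variable
  have lin1 : ∀ x z y : A,
      J (x * z + z * x) y = x * J z y + J z y * x + z * J x y + J x y * z := by
    intro x z y
    have h := hJ1 (x + z) y
    rw [show (x + z) * (x + z) = x * x + (x * z + z * x) + z * z from by noncomm_ring] at h
    simp only [map_add, LinearMap.add_apply] at h ⊢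
    linear_combination (norm := noncomm_ring) h - hJ1 x y - hJ1 z y
  -- linearized Jordan identity in the second variable
  have lin2 : ∀ x y w : A,
      J x (y * w + w * y) = y * J x w + J x w * y + w * J x y + J x y * w := by
    intro x y w
    have h := hJ2 x (y + w)
    rw [show (y + w) * (y + w) = y * y + (y * w + w * y) + w * w from by noncomm_ring] at h
    simp only [map_add] at h ⊢
    linear_combination (norm := noncomm_ring) h - hJ2 x y - hJ2 x w
  -- basic Peirce facts
  have hme : m * e = 0 := by
    linear_combination (norm := noncomm_ring) (-(hm * e)) - e * m * he
  have hem : e * m = m := by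
    linear_combination (norm := noncomm_ring) hm + e * hme
  have hen : e * n = 0 := by
    linear_combination (norm := noncomm_ring) (-(e * hn)) - he * (n * e)
  have hne : n * e = n := by
    linear_combination (norm := noncomm_ring) hn + hen * e
  have hsm : e * m + m * e = m := by rw [hem, hme, add_zero]
  have hsn : e * n + n * e = n := by rw [hen, hne, zero_add]
  refine ⟨?_, ?_, ?_, ?_⟩
  · -- J(m,n) via the first-variable derivation, D = J e n
    have hD : J e n = e * J e n + J e n * e := by have h := hJ1 e n; rwa [he] at h
    have hE : J m n = e * J m n + J m n * e + m * J e n + J e n * m := by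
      have h := lin1 e m n; rwa [hsm] at h
    exact aux12 e (J e n) (J m n) m he hm hD hE
  · -- J(m,n) via the second-variable derivation, D = J m e
    have hD : J m e = e * J m e + J m e * e := by have h := hJ2 m e; rwa [he] at h
    have hE : J m n = e * J m n + J m n * e + n * J m e + J m e * n := by
      have h := lin2 m e n; rwa [hsn] at h
    exact aux21 e (J m e) (J m n) n he hn hD hE
  · -- J(n,m) via the second-variable derivation, D = J n e
    have hD : J n e = e * J n e + J n e * e := by have h := hJ2 n e; rwa [he] at h
    have hE : J n m = e * J n m + J n m * e + m * J n e + J n e * m := by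
      have h := lin2 n e m; rwa [hsm] at h
    exact aux12 e (J n e) (J n m) m he hm hD hE
  · -- J(n,m) via the first-variable derivation, D = J e m
    have hD : J e m = e * J e m + J e m * e := by have h := hJ1 e m; rwa [he] at h
    have hE : J n m = e * J n m + J n m * e + n * J e m + J e m * n := by
      have h := lin1 e n m; rwa [hsn] at h
    exact aux21 e (J e m) (J n m) n he hn hD hE
end

section
/- Let J : A × A → A be a Jordan biderivation with J(e, e) = 0. Then for all a, a' ∈ A₁₁ and m ∈ A₁₂: eJ(m, e)e = 0, J(am, e) = aJ(m, e) + J(m, e)a, J(a, a')m = [a', a]J(m, e), and J(m, e)[a, a'] = 0. -/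
/-- Let `J : A × A → A` be a Jordan biderivation with `J(e,e) = 0`.
Then for all `a, a' ∈ A₁₁ = eAe` and `m ∈ A₁₂ = eAe'` (`e' = 1 - e`):
`eJ(m,e)e = 0`, `J(am,e) = aJ(m,e) + J(m,e)a`, `J(a,a')m = [a',a]J(m,e)` and
`J(m,e)[a,a'] = 0`. -/
theorem jordan_biderivation_key_relations
    (R A : Type*) [CommRing R] [Ring A] [Algebra R A]
    -- `A` is 2-torsion free:
    (htf : ∀ x : A, x + x = 0 → x = 0)
    -- `e` is a nontrivial idempotent:
    (e : A) (he : e * e = e) (he0 : e ≠ 0) (he1 : e ≠ 1)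
    (J : A →ₗ[R] A →ₗ[R] A)
    -- `J` is a Jordan biderivation:
    (hJ1 : ∀ x y : A, J (x * x) y = x * J x y + J x y * x)
    (hJ2 : ∀ x y : A, J x (y * y) = y * J x y + J x y * y)
    -- `J(e, e) = 0`:
    (hJe : J e e = 0) :
    ∀ a a' m : A,
      e * a * e = a → e * a' * e = a' → e * m * (1 - e) = m →
      e * J m e * e = 0 ∧
      J (a * m) e = a * J m e + J m e * a ∧
      J a a' * m = (a' * a - a * a') * J m e ∧
      J m e * (a * a' - a' * a) = 0 := by
  -- Polarized forms of the Jordan biderivation identities.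
  have polar1 : ∀ x z y : A, J (x*z + z*x) y
      = x * J z y + J x y * z + z * J x y + J z y * x := by
    intro x z y
    have h := hJ1 (x + z) y
    rw [add_mul, mul_add, mul_add] at h
    simp only [map_add, LinearMap.add_apply] at h ⊢
    linear_combination (norm := noncomm_ring) h - hJ1 x y - hJ1 z y
  have polar2 : ∀ x y z : A, J x (y*z + z*y)
      = y * J x z + J x y * z + z * J x y + J x z * y := by
    intro x y z
    have h := hJ2 x (y + z)
    rw [add_mul, mul_add, mul_add] at h
    simp only [map_add] at h ⊢
    linear_combination (norm := noncomm_ring) h - hJ2 x y - hJ2 x z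
  intro a a' m ha ha' hm
  -- Basic Peirce-component facts.
  have hf : (1-e) * (1-e) = (1-e) := by linear_combination (norm := noncomm_ring) he
  have hea : e * a = a := by
    linear_combination (norm := noncomm_ring) -(e*ha) + he*(a*e) + ha
  have hae : a * e = a := by
    linear_combination (norm := noncomm_ring) -(ha*e) + (e*a)*he + ha
  have hea' : e * a' = a' := by
    linear_combination (norm := noncomm_ring) -(e*ha') + he*(a'*e) + ha'
  have ha'e : a' * e = a' := by
    linear_combination (norm := noncomm_ring) -(ha'*e) + (e*a')*he + ha'
  have hem : e * m = m := by
    linear_combination (norm := noncomm_ring) -(e*hm) + he*(m*(1-e)) + hm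
  have hmf : m * (1-e) = m := by
    linear_combination (norm := noncomm_ring) -(hm*(1-e)) + (e*m)*hf + hm
  have hme : m * e = 0 := by
    linear_combination (norm := noncomm_ring) -(hm*e) - (e*m)*he
  have hma : m * a = 0 := by
    linear_combination (norm := noncomm_ring) -(m*ha) + hme*(a*e)
  have haf : a * (1-e) = 0 := by linear_combination (norm := noncomm_ring) -hae
  have hfa : (1-e) * a = 0 := by linear_combination (norm := noncomm_ring) -hea
  have ha'f : a' * (1-e) = 0 := by linear_combination (norm := noncomm_ring) -ha'e
  have hfa' : (1-e) * a' = 0 := by linear_combination (norm := noncomm_ring) -hea'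
  -- `J(a, e) = 0` for `a ∈ A₁₁`.
  have hTa : J a e = 0 := by
    have h1 := hJ2 a e
    rw [he] at h1
    have h2 := polar1 e a e
    simp only [hea, hae, hJe, zero_mul, mul_zero, add_zero, zero_add, map_add,
      LinearMap.add_apply] at h2
    linear_combination (norm := noncomm_ring) h2 - h1
  -- Structure of `K = J(m, e)`.
  have hK : J m e = e * J m e + J m e * e := by
    have h := polar1 e m e
    simp only [hem, hme, hJe, zero_mul, mul_zero, add_zero, zero_add, map_add,
      LinearMap.add_apply] at h
    linear_combination (norm := noncomm_ring) h
  -- Claim 1.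
  have c1 : e * J m e * e = 0 := by
    linear_combination (norm := noncomm_ring) -(e * hK * e) - he * (J m e * e)
      - (e * J m e) * he
  -- Claim 2.
  have c2 : J (a * m) e = a * J m e + J m e * a := by
    have h := polar1 a m e
    simp only [hma, hTa, zero_mul, mul_zero, add_zero, zero_add, map_add,
      LinearMap.add_apply] at h
    linear_combination (norm := noncomm_ring) h
  -- Structure of `P = J(a, a')`: it lies in `A₁₁`.
  have hP2 : J a a' + J a a' = e * J a a' + J a a' * e := by
    have h := polar2 a e a'
    simp only [hea', ha'e, hTa, zero_mul, mul_zero, add_zero, zero_add, map_add] at h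
    linear_combination (norm := noncomm_ring) h
  have hx2 : (1-e) * J a a' * e = 0 := by
    linear_combination (norm := noncomm_ring) hP2 * e + (J a a') * he
  have hx3 : (1-e) * J a a' * (1-e) = 0 := by
    refine htf _ ?_
    linear_combination (norm := noncomm_ring) (1-e) * hP2 * (1-e)
      - he * (J a a' * (1-e)) - ((1-e) * J a a') * he
  have hfP : (1-e) * J a a' = 0 := by
    linear_combination (norm := noncomm_ring) hx2 + hx3
  have heP : e * J a a' = J a a' := by
    linear_combination (norm := noncomm_ring) -hfP
  have hmP : m * J a a' = 0 := by
    linear_combination (norm := noncomm_ring) -(m * heP) + hme * (J a a')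
  -- Components of `V = J(m, a')`.
  have hV2 : J m a' + J m a'
      = e * J m a' + J m e * a' + a' * J m e + J m a' * e := by
    have h := polar2 m e a'
    simp only [hea', ha'e, map_add] at h
    linear_combination (norm := noncomm_ring) h
  have hV12 : e * J m a' * (1-e) = a' * J m e * (1-e) := by
    linear_combination (norm := noncomm_ring) e * hV2 * (1-e) + he * (J m a' * (1-e))
      + e * (J m e) * ha'f + hea' * (J m e * (1-e)) - (e * J m a') * he
  have hV21 : (1-e) * J m a' * e = (1-e) * J m e * a' := by
    linear_combination (norm := noncomm_ring) (1-e) * hV2 * e - he * (J m a' * e)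
      + ((1-e) * J m e) * ha'e + hfa' * (J m e * e) + ((1-e) * J m a') * he
  -- Components of `W = J(am, a')`.
  have hW2 : J (a*m) a' + J (a*m) a'
      = e * J (a*m) a' + J (a*m) e * a' + a' * J (a*m) e + J (a*m) a' * e := by
    have h := polar2 (a*m) e a'
    simp only [hea', ha'e, map_add] at h
    linear_combination (norm := noncomm_ring) h
  have hW12 : e * J (a*m) a' * (1-e) = a' * J (a*m) e * (1-e) := by
    linear_combination (norm := noncomm_ring) e * hW2 * (1-e) + he * (J (a*m) a' * (1-e))
      + e * (J (a*m) e) * ha'f + hea' * (J (a*m) e * (1-e)) - (e * J (a*m) a') * he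
  have hW21 : (1-e) * J (a*m) a' * e = (1-e) * J (a*m) e * a' := by
    linear_combination (norm := noncomm_ring) (1-e) * hW2 * e - he * (J (a*m) a' * e)
      + ((1-e) * J (a*m) e) * ha'e + hfa' * (J (a*m) e * e) + ((1-e) * J (a*m) a') * he
  -- `W` via the first-slot polarization.
  have hW8 : J (a*m) a' = a * J m a' + J a a' * m + J m a' * a := by
    have h := polar1 a m a'
    simp only [hma, hmP, add_zero, zero_add] at h
    linear_combination (norm := noncomm_ring) h
  -- Claim 3.
  have s1 : e * J (a*m) a' * (1-e) = a' * a * J m e * (1-e) := by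
    linear_combination (norm := noncomm_ring) hW12 + a' * c2 * (1-e)
      + (a' * J m e) * haf
  have s2 : e * J (a*m) a' * (1-e) = a * a' * J m e * (1-e) + J a a' * m := by
    linear_combination (norm := noncomm_ring) e * hW8 * (1-e)
      + hea * (J m a' * (1-e)) - hae * (J m a' * (1-e)) + a * hV12
      + heP * (m * (1-e)) + (J a a') * hmf + (e * (J m a')) * haf
  have c3 : J a a' * m = (a' * a - a * a') * J m e := by
    linear_combination (norm := noncomm_ring) s1 - s2 + (a * a') * c1
      - a * ha'e * (J m e * e) - (a' * a) * c1 + a' * hae * (J m e * e)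
  -- Claim 4.
  have t1 : (1-e) * J (a*m) a' * e = (1-e) * J m e * a * a' := by
    linear_combination (norm := noncomm_ring) hW21 + (1-e) * c2 * a'
      + hfa * (J m e * a')
  have t2 : (1-e) * J (a*m) a' * e = (1-e) * J m e * a' * a := by
    linear_combination (norm := noncomm_ring) (1-e) * hW8 * e + hfa * (J m a' * e)
      + hfP * (m * e) + ((1-e) * (J m a')) * hae - ((1-e) * (J m a')) * hea
      + hV21 * a
  have t3 : (1-e) * J m e * (a * a' - a' * a) = 0 := by
    linear_combination (norm := noncomm_ring) t2 - t1
  have c4 : J m e * (a * a' - a' * a) = 0 := by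
    linear_combination (norm := noncomm_ring) t3 + c1 * (a * a')
      - (e * (J m e)) * hea * a' - c1 * (a' * a) + (e * (J m e)) * hea' * a
  exact ⟨c1, c2, c3, c4⟩
end
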